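/- arXiv:2107.06345 — 7 statements merged into one kernel-verified Lean document; each statement's English description precedes it below -/
import Mathlib

section
/- Let L be a symmetric n×n real matrix and V an n×p real matrix of full column rank, p ≤ n. Let Q be an n×(n−p) matrix whose columns form an orthonormal basis of the orthogonal complement of the column span of V (so QᵀV = 0 and QᵀQ = I). Then det([[L, V],[Vᵀ, 0]]) = (−1)^p · det(VᵀV) · det(QᵀLQ). -/
open Matrix

section helpers

variable {R : Type*} [CommRing R]

lemma submatrix_mul_id' {l m n o : Type*} [Fintype n]
    (X : Matrix m n R) (Y : Matrix n o R) (f : l → m) :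
    X.submatrix f id * Y = (X * Y).submatrix f id := by
  ext i j
  simp [Matrix.mul_apply]

lemma mul_submatrix_id' {l m n o : Type*} [Fintype n]
    (X : Matrix m n R) (Y : Matrix n o R) (g : l → o) :
    X * Y.submatrix id g = (X * Y).submatrix id g := by
  ext i j
  simp [Matrix.mul_apply]

lemma fromBlocks_submatrix_map' {l m o p l' m' o' p' : Type*}
    (A : Matrix l m R) (B : Matrix l o R) (C : Matrix p m R) (D : Matrix p o R)
    (f : l' → l) (g : p' → p) (f' : m' → m) (g' : o' → o) :
    (fromBlocks A B C D).submatrix (Sum.map f g) (Sum.map f' g') =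
      fromBlocks (A.submatrix f f') (B.submatrix f g')
        (C.submatrix g f') (D.submatrix g g') := by
  ext (i | i) (j | j) <;> rfl

lemma fromRows_add' {m₁ m₂ n : Type*} (A₁ C₁ : Matrix m₁ n R) (A₂ C₂ : Matrix m₂ n R) :
    fromRows A₁ A₂ + fromRows C₁ C₂ = fromRows (A₁ + C₁) (A₂ + C₂) := by
  ext (i | i) j <;> rfl

lemma fromBlocks_sub' {l m o p : Type*}
    (A A' : Matrix l m R) (B B' : Matrix l o R) (C C' : Matrix p m R) (D D' : Matrix p o R) :
    fromBlocks A B C D - fromBlocks A' B' C' D' =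
      fromBlocks (A - A') (B - B') (C - C') (D - D') := by
  ext (i | i) (j | j) <;> rfl

end helpers

/-- Full column rank implies `VᵀV` has unit determinant. -/
lemma isUnit_det_transpose_mul_self_aux {n p : ℕ}
    (V : Matrix (Fin n) (Fin p) ℝ) (hV : V.rank = p) :
    IsUnit (Vᵀ * V).det := by
  rw [← Matrix.isUnit_iff_isUnit_det, ← Matrix.mulVec_injective_iff_isUnit]
  have hker : LinearMap.ker (Vᵀ * V).mulVecLin = ⊥ := by
    rw [Matrix.ker_mulVecLin_transpose_mul_self]
    have hrn := LinearMap.finrank_range_add_finrank_ker V.mulVecLin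
    rw [show Module.finrank ℝ (LinearMap.range V.mulVecLin) = p from hV] at hrn
    have hdom : Module.finrank ℝ (Fin p → ℝ) = p := by simp
    rw [hdom] at hrn
    have h0 : Module.finrank ℝ (LinearMap.ker V.mulVecLin) = 0 := by omega
    exact Submodule.finrank_eq_zero.mp h0
  have h := LinearMap.ker_eq_bot.mp hker
  intro x y hxy
  exact h (by rw [Matrix.mulVecLin_apply, Matrix.mulVecLin_apply]; exact hxy)

/-- Determinant of a saddle-point matrix. -/
theorem det_saddlePoint {n p : ℕ} (hpn : p ≤ n)
    (L : Matrix (Fin n) (Fin n) ℝ) (hL : Lᵀ = L)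
    (V : Matrix (Fin n) (Fin p) ℝ) (hV : V.rank = p)
    (Q : Matrix (Fin n) (Fin (n - p)) ℝ)
    (hQV : Qᵀ * V = 0) (hQQ : Qᵀ * Q = 1) :
    (Matrix.fromBlocks L V Vᵀ (0 : Matrix (Fin p) (Fin p) ℝ)).det =
      (-1 : ℝ) ^ p * (Vᵀ * V).det * (Qᵀ * L * Q).det := by
  classical
  set A : Matrix (Fin p) (Fin p) ℝ := Vᵀ * V with hA_def
  set Z : Matrix (Fin (n - p)) (Fin (n - p)) ℝ := Qᵀ * L * Q with hZ_def
  have hA : IsUnit A.det := isUnit_det_transpose_mul_self_aux V hV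
  have hVQ : Vᵀ * Q = 0 := by
    have := congrArg Matrix.transpose hQV
    simpa using this
  -- the change-of-basis matrix
  set e : Fin p ⊕ Fin (n - p) ≃ Fin n :=
    finSumFinEquiv.trans (finCongr (Nat.add_sub_cancel' hpn)) with he_def
  set C : Matrix (Fin n) (Fin p ⊕ Fin (n - p)) ℝ := fromCols V Q with hC_def
  set U : Matrix (Fin n) (Fin n) ℝ := C.submatrix id e.symm with hU_def
  have hUt : Uᵀ = Cᵀ.submatrix e.symm id := by
    rw [hU_def, transpose_submatrix]
  have hCtC : Cᵀ * C = fromBlocks A 0 0 1 := by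
    rw [hC_def, transpose_fromCols, fromRows_mul_fromCols, hQV, hVQ, hQQ]
  have hCtLC : Cᵀ * L * C =
      fromBlocks (Vᵀ * L * V) (Vᵀ * L * Q) (Qᵀ * L * V) Z := by
    rw [hC_def, transpose_fromCols, fromRows_mul, fromRows_mul_fromCols, hZ_def]
  have hCtV : Cᵀ * V = fromRows A 0 := by
    rw [hC_def, transpose_fromCols, fromRows_mul, hQV, hA_def]
  have hVtC : Vᵀ * C = fromCols A 0 := by
    rw [hC_def, mul_fromCols, hVQ, hA_def]
  -- products with U are reindexed products with C
  have hUtU : Uᵀ * U = (Cᵀ * C).submatrix e.symm e.symm := by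
    rw [hUt, hU_def, submatrix_mul_id', mul_submatrix_id', submatrix_submatrix]
    rfl
  have hUtLU : Uᵀ * L * U = (Cᵀ * L * C).submatrix e.symm e.symm := by
    rw [hUt, hU_def, submatrix_mul_id', submatrix_mul_id', mul_submatrix_id',
      submatrix_submatrix]
    rfl
  have hUtV : Uᵀ * V = (Cᵀ * V).submatrix e.symm id := by
    rw [hUt, submatrix_mul_id']
  have hVtU : Vᵀ * U = (Vᵀ * C).submatrix id e.symm := by
    rw [hU_def, mul_submatrix_id']
  have hdetU : U.det * U.det = A.det := by
    calc U.det * U.det = Uᵀ.det * U.det := by rw [det_transpose]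
    _ = (Uᵀ * U).det := (det_mul _ _).symm
    _ = (fromBlocks A (0 : Matrix (Fin p) (Fin (n-p)) ℝ)
          (0 : Matrix (Fin (n-p)) (Fin p) ℝ) 1).det := by
        rw [hUtU, hCtC, det_submatrix_equiv_self]
    _ = A.det := by rw [det_fromBlocks_zero₂₁, det_one, mul_one]
  -- conjugate the saddle-point matrix
  set M : Matrix (Fin n ⊕ Fin p) (Fin n ⊕ Fin p) ℝ := fromBlocks L V Vᵀ 0 with hM_def
  set P : Matrix (Fin n ⊕ Fin p) (Fin n ⊕ Fin p) ℝ := fromBlocks U 0 0 1 with hP_def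
  have hPt : Pᵀ = fromBlocks Uᵀ 0 0 1 := by
    rw [hP_def, fromBlocks_transpose, transpose_zero, transpose_zero, transpose_one]
  have hN : Pᵀ * M * P = fromBlocks (Uᵀ * L * U) (Uᵀ * V) (Vᵀ * U) 0 := by
    rw [hPt, hM_def, hP_def, fromBlocks_multiply, fromBlocks_multiply]
    congr 1 <;> simp [Matrix.mul_assoc]
  have hdetP : P.det = U.det := by
    rw [hP_def, det_fromBlocks_zero₂₁, det_one, mul_one]
  have hdetN : (Pᵀ * M * P).det = A.det * M.det := by
    rw [det_mul, det_mul, det_transpose, hdetP]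
    calc U.det * M.det * U.det = U.det * U.det * M.det := by ring
    _ = A.det * M.det := by rw [hdetU]
  -- reindex the conjugated matrix into explicit blocks
  set E : (Fin p ⊕ Fin (n - p)) ⊕ Fin p ≃ Fin n ⊕ Fin p :=
    Equiv.sumCongr e (Equiv.refl (Fin p)) with hE_def
  have hEcoe : ⇑E = Sum.map ⇑e id := rfl
  set G : Matrix (Fin p ⊕ Fin (n - p)) (Fin p ⊕ Fin (n - p)) ℝ :=
    fromBlocks (Vᵀ * L * V) (Vᵀ * L * Q) (Qᵀ * L * V) Z with hG_def
  have hN' : (Pᵀ * M * P).submatrix E E =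
      fromBlocks G (fromRows A 0) (fromCols A 0) 0 := by
    rw [hN, hEcoe, fromBlocks_submatrix_map', hUtLU, hUtV, hVtU, hCtLC, hCtV, hVtC]
    rw [submatrix_submatrix, submatrix_submatrix, submatrix_submatrix]
    simp only [Equiv.symm_comp_self, Function.comp_id, Function.id_comp, submatrix_id_id,
      Matrix.submatrix_zero, Pi.zero_apply]
  -- column operation to make the bottom-right block invertible
  set K : Matrix (Fin p ⊕ Fin (n - p)) (Fin p) ℝ := fromRows 1 0 with hK_def
  set Rm : Matrix ((Fin p ⊕ Fin (n - p)) ⊕ Fin p) ((Fin p ⊕ Fin (n - p)) ⊕ Fin p) ℝ :=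
    fromBlocks 1 K 0 1 with hR_def
  have hdetR : Rm.det = 1 := by
    rw [hR_def, det_fromBlocks_zero₂₁, det_one, det_one, mul_one]
  have hGK : G * K = fromRows (Vᵀ * L * V) (Qᵀ * L * V) := by
    rw [hG_def, hK_def, fromBlocks_mul_fromRows]
    simp
  have hprod : fromBlocks G (fromRows A 0) (fromCols A 0) 0 * Rm =
      fromBlocks G (G * K + fromRows A 0) (fromCols A 0) A := by
    rw [hR_def, fromBlocks_multiply]
    simp only [Matrix.mul_one, Matrix.mul_zero, Matrix.zero_mul, Matrix.one_mul,
      add_zero, zero_add, zero_add]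
    rw [hK_def, fromCols_mul_fromRows]
    simp
  haveI : Invertible A := A.invertibleOfIsUnitDet hA
  have hSchur : (fromBlocks G (G * K + fromRows A 0) (fromCols A 0) A).det =
      A.det * ((-1 : ℝ) ^ p * A.det * Z.det) := by
    rw [det_fromBlocks₂₂]
    congr 1
    have hBDC : (G * K + fromRows A (0 : Matrix (Fin (n - p)) (Fin p) ℝ)) * ⅟A *
          fromCols A (0 : Matrix (Fin p) (Fin (n - p)) ℝ) =
        fromBlocks (Vᵀ * L * V + A) (0 : Matrix (Fin p) (Fin (n - p)) ℝ)
          (Qᵀ * L * V) (0 : Matrix (Fin (n - p)) (Fin (n - p)) ℝ) := by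
      rw [hGK, fromRows_add', fromRows_mul, fromRows_mul_fromCols]
      simp [Matrix.add_mul, Matrix.mul_assoc]
    rw [hBDC, hG_def, fromBlocks_sub']
    have h11 : Vᵀ * L * V - (Vᵀ * L * V + A) = -A := by abel
    rw [h11, sub_zero, sub_self, sub_zero, det_fromBlocks_zero₂₁, det_neg]
    simp [mul_comm, mul_assoc, mul_left_comm]
  -- put everything together
  have key : A.det * M.det = A.det * ((-1 : ℝ) ^ p * A.det * Z.det) := by
    calc A.det * M.det = (Pᵀ * M * P).det := hdetN.symm
    _ = ((Pᵀ * M * P).submatrix E E).det := (det_submatrix_equiv_self E _).symm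
    _ = (fromBlocks G (fromRows A 0) (fromCols A 0) 0).det := by rw [hN']
    _ = (fromBlocks G (fromRows A 0) (fromCols A 0) 0).det * Rm.det := by
        rw [hdetR, mul_one]
    _ = (fromBlocks G (fromRows A 0) (fromCols A 0) 0 * Rm).det := (det_mul _ _).symm
    _ = (fromBlocks G (G * K + fromRows A 0) (fromCols A 0) A).det := by rw [hprod]
    _ = A.det * ((-1 : ℝ) ^ p * A.det * Z.det) := hSchur
  have hAne : A.det ≠ 0 := hA.ne_zero
  exact mul_left_cancel₀ hAne key
end

section
/- Let L be an n×n real matrix and V an n×p real matrix. Then the polynomial g(t) = det(L + t·V·Vᵀ) has degree at most p in t, and its coefficient of t^p equals (−1)^p · det([[L, V],[Vᵀ, 0]]). -/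
open Matrix Polynomial

lemma coeff_prod_of_natDegree_le' {ι R : Type*} [CommSemiring R] (s : Finset ι)
    (f : ι → R[X]) (d : ι → ℕ) (h : ∀ i ∈ s, (f i).natDegree ≤ d i) :
    (∏ i ∈ s, f i).coeff (∑ i ∈ s, d i) = ∏ i ∈ s, (f i).coeff (d i) := by
  induction s using Finset.cons_induction with
  | empty => simp
  | cons a s ha ih =>
    rw [Finset.prod_cons, Finset.sum_cons, Finset.prod_cons,
      coeff_mul_add_eq_of_natDegree_le (h a (Finset.mem_cons_self a s))
        (Polynomial.natDegree_prod_le _ _ |>.trans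
          (Finset.sum_le_sum fun i hi => h i (Finset.mem_cons_of_mem hi))),
      ih fun i hi => h i (Finset.mem_cons_of_mem hi)]

/-- The polynomial `t ↦ det (L + t V Vᵀ)` has degree at most `p`, and its `t^p`
coefficient is `(-1)^p` times the determinant of the saddle-point matrix. -/
theorem det_add_smul_coeff {n p : ℕ}
    (L : Matrix (Fin n) (Fin n) ℝ) (V : Matrix (Fin n) (Fin p) ℝ) :
    ((L.map Polynomial.C + (Polynomial.X : Polynomial ℝ) • (V * Vᵀ).map Polynomial.C).det).natDegree ≤ p ∧
    ((L.map Polynomial.C + (Polynomial.X : Polynomial ℝ) • (V * Vᵀ).map Polynomial.C).det).coeff p =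
      (-1 : ℝ) ^ p * (Matrix.fromBlocks L V Vᵀ (0 : Matrix (Fin p) (Fin p) ℝ)).det := by
  set M : Matrix (Fin n ⊕ Fin p) (Fin n ⊕ Fin p) ℝ[X] :=
    fromBlocks (L.map C) ((X : ℝ[X]) • V.map C) (Vᵀ.map C) (-1) with hM
  set N : Matrix (Fin n ⊕ Fin p) (Fin n ⊕ Fin p) ℝ :=
    fromBlocks L V Vᵀ 0 with hN
  set d : Fin n ⊕ Fin p → ℕ := Sum.elim (fun _ => 0) (fun _ => 1) with hd
  -- entrywise facts
  have hdeg : ∀ i j, (M i j).natDegree ≤ d j := by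
    rintro (a | a) (b | b) <;>
      simp [hM, hd, fromBlocks_apply₁₁, fromBlocks_apply₁₂, fromBlocks_apply₂₁,
        fromBlocks_apply₂₂, Matrix.smul_apply, smul_eq_mul, Matrix.one_apply]
    · exact (natDegree_mul_le).trans (by simp)
    · split <;> simp
  have hcoeff : ∀ i j, (M i j).coeff (d j) = N i j := by
    rintro (a | a) (b | b) <;>
      simp [hM, hN, hd, fromBlocks_apply₁₁, fromBlocks_apply₁₂, fromBlocks_apply₂₁,
        fromBlocks_apply₂₂, Matrix.smul_apply, smul_eq_mul, Matrix.one_apply,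
        coeff_X_mul]
    split <;> simp [Polynomial.coeff_one]
  have hsum : (∑ i : Fin n ⊕ Fin p, d i) = p := by
    simp [hd, Fintype.sum_sum_type]
  -- the Schur complement identity
  haveI : Invertible (1 : Matrix (Fin p) (Fin p) ℝ[X]) := invertibleOne
  haveI : Invertible (-1 : Matrix (Fin p) (Fin p) ℝ[X]) := invertibleNeg 1
  have hdet : M.det = (-1 : ℝ[X]) ^ p *
      (L.map C + (X : ℝ[X]) • (V * Vᵀ).map C).det := by
    rw [hM, Matrix.det_fromBlocks₂₂]
    congr 1
    · simp [Matrix.det_neg]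
    · congr 1
      rw [invOf_neg, invOf_one]
      simp [Matrix.smul_mul, Matrix.map_mul, sub_neg_eq_add, Matrix.mul_one]
  have hg : (L.map C + (X : ℝ[X]) • (V * Vᵀ).map C).det = (-1 : ℝ[X]) ^ p * M.det := by
    rw [hdet, ← mul_assoc, ← mul_pow]
    simp
  have hMdeg : M.det.natDegree ≤ p := by
    rw [Matrix.det_apply']
    refine Polynomial.natDegree_sum_le_of_forall_le _ _ fun σ _ => ?_
    refine (Polynomial.natDegree_mul_le).trans ?_
    rw [Polynomial.natDegree_intCast, zero_add]
    refine (Polynomial.natDegree_prod_le _ _).trans ?_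
    exact (Finset.sum_le_sum fun i _ => hdeg (σ i) i).trans hsum.le
  have hMcoeff : M.det.coeff p = N.det := by
    rw [Matrix.det_apply', Polynomial.finset_sum_coeff, Matrix.det_apply']
    refine Finset.sum_congr rfl fun σ _ => ?_
    have hc : (((Equiv.Perm.sign σ : ℤ)) : ℝ[X]) = C (((Equiv.Perm.sign σ : ℤ)) : ℝ) :=
      (map_intCast (C : ℝ →+* ℝ[X]) _).symm
    have hpr := coeff_prod_of_natDegree_le' Finset.univ (fun i => M (σ i) i) d
      fun i _ => hdeg (σ i) i
    rw [hsum] at hpr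
    rw [hc, Polynomial.coeff_C_mul, hpr]
    congr 1
    exact Finset.prod_congr rfl fun i _ => hcoeff (σ i) i
  constructor
  · rw [hg]
    refine (Polynomial.natDegree_mul_le).trans ?_
    simpa using hMdeg
  · rw [hg]
    have : ((-1 : ℝ[X]) ^ p) = C ((-1 : ℝ) ^ p) := by
      simp
    rw [this, Polynomial.coeff_C_mul, hMcoeff]
end

section
/- Let (L, V) be a pair with L ∈ ℝ^{n×n} symmetric and conditionally positive semi-definite with respect to V ∈ ℝ^{n×p} of full column rank. Let Q have orthonormal columns spanning span(V), and L̃ = (I−QQᵀ)L(I−QQᵀ). Then for every subset X ⊆ {1,...,n}: (−1)^p · det([[L_X, V_{X,:}],[(V_{X,:})ᵀ, 0]]) = (−1)^p · det([[L̃_X, V_{X,:}],[(V_{X,:})ᵀ, 0]]) and this common value is ≥ 0. -/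
open Matrix

set_option maxHeartbeats 1000000

/-- The saddle-point matrix `[[L_X, V_X],[V_Xᵀ, 0]]` restricted to rows/columns in `X`. -/
def saddleSub {n p : ℕ} (L : Matrix (Fin n) (Fin n) ℝ) (V : Matrix (Fin n) (Fin p) ℝ)
    (X : Finset (Fin n)) : Matrix (↥X ⊕ Fin p) (↥X ⊕ Fin p) ℝ :=
  Matrix.fromBlocks (L.submatrix (fun i => i.1) (fun i => i.1))
    (V.submatrix (fun i => i.1) id) (V.submatrix (fun i => i.1) id)ᵀ 0

lemma realCT {a b : Type*} (N : Matrix a b ℝ) : Nᴴ = Nᵀ := by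
  ext i j; simp [conjTranspose_apply]

lemma psd_det_nonneg {m : Type*} [Fintype m] [DecidableEq m] {A : Matrix m m ℝ}
    (hA : A.PosSemidef) : 0 ≤ A.det := by
  exact hA.det_nonneg

lemma smul_one_posDef {m : Type*} [Fintype m] [DecidableEq m] {ε : ℝ} (hε : 0 < ε) :
    (ε • (1 : Matrix m m ℝ)).PosDef := by
  have h : ε • (1 : Matrix m m ℝ) = Matrix.diagonal (fun _ => ε) := by
    ext i j
    by_cases h : i = j <;> simp [Matrix.one_apply, Matrix.diagonal, h]
  rw [h]
  exact Matrix.posDef_diagonal_iff.mpr fun _ => hε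

lemma saddle_det_nonneg_of_psd {m : Type*} [Fintype m] [DecidableEq m] {p : ℕ}
    {A : Matrix m m ℝ} (hA : A.PosSemidef) (N : Matrix m (Fin p) ℝ) :
    0 ≤ (-1 : ℝ) ^ p * (fromBlocks A N Nᵀ (0 : Matrix (Fin p) (Fin p) ℝ)).det := by
  have h1 : ((-1 : ℝ) ^ p) * ((-1 : ℝ) ^ p) = 1 := by
    rw [← pow_add, ← two_mul, pow_mul]; norm_num
  have key : ∀ ε : ℝ, 0 < ε →
      0 ≤ (-1 : ℝ) ^ p * (fromBlocks (A + ε • 1) N Nᵀ (0 : Matrix (Fin p) (Fin p) ℝ)).det := by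
    intro ε hε
    have hPD : (A + ε • 1).PosDef := Matrix.PosDef.posSemidef_add hA (smul_one_posDef hε)
    haveI : Invertible (A + ε • 1) := hPD.isUnit.invertible
    have hinv : ⅟(A + ε • 1) = (A + ε • 1)⁻¹ := invOf_eq_nonsing_inv _
    have hpsd2 : (Nᵀ * (A + ε • 1)⁻¹ * N).PosSemidef := by
      have := (hPD.inv).posSemidef.conjTranspose_mul_mul_same N
      rwa [realCT] at this
    rw [Matrix.det_fromBlocks₁₁, hinv, zero_sub, det_neg, Fintype.card_fin]
    have hd1 : 0 ≤ (A + ε • 1).det := le_of_lt hPD.det_pos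
    have hd2 : 0 ≤ (Nᵀ * (A + ε • 1)⁻¹ * N).det := psd_det_nonneg hpsd2
    set d1 := (A + ε • 1).det
    set d2 := (Nᵀ * (A + ε • 1)⁻¹ * N).det
    have e : (-1 : ℝ) ^ p * (d1 * ((-1 : ℝ) ^ p * d2)) =
        (((-1 : ℝ) ^ p) * ((-1 : ℝ) ^ p)) * (d1 * d2) := by ring
    rw [e, h1, one_mul]
    exact mul_nonneg hd1 hd2
  have hc : Continuous fun ε : ℝ =>
      (-1 : ℝ) ^ p * (fromBlocks (A + ε • 1) N Nᵀ (0 : Matrix (Fin p) (Fin p) ℝ)).det := by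
    refine continuous_const.mul (Continuous.matrix_det ?_)
    refine continuous_matrix fun i j => ?_
    cases i <;> cases j <;> simp [fromBlocks] <;> fun_prop
  have h0 : Filter.Tendsto
      (fun ε : ℝ => (-1 : ℝ) ^ p *
        (fromBlocks (A + ε • 1) N Nᵀ (0 : Matrix (Fin p) (Fin p) ℝ)).det)
      (nhdsWithin 0 (Set.Ioi 0)) (nhds ((-1 : ℝ) ^ p *
        (fromBlocks (A + (0:ℝ) • 1) N Nᵀ (0 : Matrix (Fin p) (Fin p) ℝ)).det)) :=
    (hc.tendsto 0).mono_left nhdsWithin_le_nhds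
  have := ge_of_tendsto h0 (eventually_nhdsWithin_of_forall fun ε hε => key ε hε)
  simpa using this

/-- For a nonnegative pair `(L, V)`, the saddle-point determinants of `L` and of the
projected matrix `L̃` coincide on every subset `X`, and are nonnegative up to `(-1)^p`. -/
theorem saddle_det_eq_and_nonneg {n p : ℕ}
    (L : Matrix (Fin n) (Fin n) ℝ) (hL : Lᵀ = L)
    (V : Matrix (Fin n) (Fin p) ℝ) (hV : V.rank = p)
    (hCPSD : ∀ x : Fin n → ℝ, Vᵀ.mulVec x = 0 → 0 ≤ x ⬝ᵥ L.mulVec x)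
    (Q : Matrix (Fin n) (Fin p) ℝ) (hQQ : Qᵀ * Q = 1)
    (hspan : ∃ R : Matrix (Fin p) (Fin p) ℝ, V = Q * R)
    (X : Finset (Fin n)) :
    (-1 : ℝ) ^ p * (saddleSub L V X).det =
      (-1 : ℝ) ^ p * (saddleSub ((1 - Q * Qᵀ) * L * (1 - Q * Qᵀ)) V X).det ∧
    0 ≤ (-1 : ℝ) ^ p * (saddleSub L V X).det := by
  classical
  obtain ⟨R, hVR⟩ := hspan
  set P : Matrix (Fin n) (Fin n) ℝ := 1 - Q * Qᵀ with hPdef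
  -- Vᵀ * P = 0
  have hQtQQt : Qᵀ * (Q * Qᵀ) = Qᵀ := by
    rw [← Matrix.mul_assoc, hQQ, Matrix.one_mul]
  have hVtP : Vᵀ * P = 0 := by
    rw [hVR, hPdef, Matrix.transpose_mul, Matrix.mul_sub, Matrix.mul_one,
      Matrix.mul_assoc, hQtQQt, sub_self]
  -- R is invertible
  have hVinj : Function.Injective V.mulVecLin := by
    have h1 := LinearMap.finrank_range_add_finrank_ker V.mulVecLin
    have h2 : Module.finrank ℝ (LinearMap.range V.mulVecLin) = p := hV
    rw [h2, Module.finrank_fin_fun] at h1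
    have h3 : Module.finrank ℝ (LinearMap.ker V.mulVecLin) = 0 := by omega
    rw [← LinearMap.ker_eq_bot]
    exact Submodule.finrank_eq_zero.mp h3
  have hRinj : Function.Injective R.mulVec := by
    intro x y hxy
    apply hVinj
    simp only [mulVecLin_apply, hVR, ← Matrix.mulVec_mulVec, hxy]
  haveI : Invertible R := (Matrix.mulVec_injective_iff_isUnit.mp hRinj).invertible
  set S : Matrix (Fin p) (Fin n) ℝ := ⅟R * Qᵀ with hSdef
  have hVS : V * S = Q * Qᵀ := by
    rw [hVR, hSdef, Matrix.mul_assoc, ← Matrix.mul_assoc R, mul_invOf_self, Matrix.one_mul]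
  have hSV : Sᵀ * Vᵀ = Q * Qᵀ := by
    rw [← Matrix.transpose_mul, hVS, Matrix.transpose_mul, Matrix.transpose_transpose]
  set A' : Matrix (Fin p) (Fin n) ℝ := -(S * L) with hA'def
  set B' : Matrix (Fin n) (Fin p) ℝ := -(L * Sᵀ) + V * (S * L * Sᵀ) with hB'def
  have hexp : P * L * P = L + V * A' + B' * Vᵀ := by
    rw [hPdef, hA'def, hB'def]
    nth_rewrite 2 [← hSV]
    nth_rewrite 1 [← hVS]
    noncomm_ring
    simp only [neg_smul, one_smul, Matrix.mul_neg, Matrix.neg_mul, Matrix.mul_assoc,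
      Matrix.add_mul]
  -- PSD of P*L*P
  have hPt : Pᵀ = P := by
    rw [hPdef, Matrix.transpose_sub, Matrix.transpose_one, Matrix.transpose_mul,
      Matrix.transpose_transpose]
  have hM : (P * L * P).PosSemidef := by
    rw [Matrix.posSemidef_iff_dotProduct_mulVec]
    constructor
    · show (P * L * P)ᴴ = P * L * P
      rw [realCT, Matrix.transpose_mul, Matrix.transpose_mul, hL, hPt, Matrix.mul_assoc]
    · intro x
      have hstar : star x = x := by ext i; simp
      rw [hstar]
      have h1 : (P * L * P) *ᵥ x = P *ᵥ (L *ᵥ (P *ᵥ x)) := by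
        rw [Matrix.mulVec_mulVec, Matrix.mulVec_mulVec]
      rw [h1, Matrix.dotProduct_mulVec, ← Matrix.mulVec_transpose, hPt]
      have h2 : Vᵀ *ᵥ (P *ᵥ x) = 0 := by
        rw [Matrix.mulVec_mulVec, hVtP, Matrix.zero_mulVec]
      have := hCPSD (P *ᵥ x) h2
      rw [Matrix.dotProduct_mulVec] at this ⊢
      rw [← Matrix.mulVec_transpose] at this ⊢
      exact this
  -- determinant equality
  have hdeteq : (saddleSub (P * L * P) V X).det = (saddleSub L V X).det := by
    have hblock : saddleSub (P * L * P) V X =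
        fromBlocks 1 (B'.submatrix (fun i : ↥X => i.1) id) 0 1 *
          saddleSub L V X *
          fromBlocks 1 0 (A'.submatrix id (fun i : ↥X => i.1)) 1 := by
      rw [hexp]
      unfold saddleSub
      rw [Matrix.fromBlocks_multiply, Matrix.fromBlocks_multiply]
      have e1 : (V * A').submatrix (fun i : ↥X => i.1) (fun i : ↥X => i.1) =
          V.submatrix (fun i : ↥X => i.1) id * A'.submatrix id (fun i : ↥X => i.1) :=
        Matrix.submatrix_mul _ _ _ id _ Function.bijective_id
      have e2 : (B' * Vᵀ).submatrix (fun i : ↥X => i.1) (fun i : ↥X => i.1) =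
          B'.submatrix (fun i : ↥X => i.1) id * Vᵀ.submatrix id (fun i : ↥X => i.1) :=
        Matrix.submatrix_mul _ _ _ id _ Function.bijective_id
      have e3 : Vᵀ.submatrix id (fun i : ↥X => i.1) =
          (V.submatrix (fun i : ↥X => i.1) id)ᵀ := by
        rw [Matrix.transpose_submatrix]
      have htl : (L + V * A' + B' * Vᵀ).submatrix (fun i : ↥X => i.1) (fun i : ↥X => i.1) =
          L.submatrix (fun i : ↥X => i.1) (fun i : ↥X => i.1) +
            V.submatrix (fun i : ↥X => i.1) id * A'.submatrix id (fun i : ↥X => i.1) +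
            B'.submatrix (fun i : ↥X => i.1) id * (V.submatrix (fun i : ↥X => i.1) id)ᵀ := by
        rw [← e1, ← e3, ← e2]
        ext i j
        simp [Matrix.submatrix_apply, Matrix.add_apply]
      rw [htl]
      simp only [Matrix.one_mul, Matrix.mul_one, Matrix.zero_mul, Matrix.mul_zero,
          add_zero, zero_add]
      abel
    rw [hblock, Matrix.det_mul, Matrix.det_mul, Matrix.det_fromBlocks_zero₂₁,
      Matrix.det_fromBlocks_zero₁₂, Matrix.det_one, Matrix.det_one]
    ring
  have hnn : 0 ≤ (-1 : ℝ) ^ p * (saddleSub (P * L * P) V X).det := by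
    have := saddle_det_nonneg_of_psd (hM.submatrix (fun i : ↥X => i.1))
      (V.submatrix (fun i : ↥X => i.1) id)
    exact this
  constructor
  · rw [hdeteq]
  · rw [← hdeteq]; exact hnn
end

section
/- (Generalized Cauchy–Binet for saddle-point matrices.) Let (L,V) be a nonnegative pair: L ∈ ℝ^{n×n} symmetric, conditionally positive semi-definite with respect to V ∈ ℝ^{n×p} of full column rank. Let Q ∈ ℝ^{n×p} be an orthonormal basis of span(V), L̃ = (I−QQᵀ)L(I−QQᵀ) with truncated eigendecomposition L̃ = Ũ·Λ̃·Ũᵀ (Λ̃ = diag(λ̃_1,...,λ̃_q) the nonzero eigenvalues, Ũ the corresponding orthonormal eigenvectors, q = rank L̃). Then for any X ⊆ {1,...,n} with |X| = m, p ≤ m ≤ p+q: (−1)^p·det([[L_X, V_{X,:}],[(V_{X,:})ᵀ, 0]]) = det(VᵀV) · Σ_{Y⊆{1,...,q}, |Y|=m−p} det([Q_{X,:} Ũ_{X,Y}])² · ∏_{i∈Y} λ̃_i. -/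
open Matrix

/-- The matrix `[Q_{X,:}  Ũ_{X,Y}]`: rows indexed by `X`, columns by `Fin p ⊕ ↥Y`. -/
def concatSub {n p q : ℕ} (Q : Matrix (Fin n) (Fin p) ℝ) (U : Matrix (Fin n) (Fin q) ℝ)
    (X : Finset (Fin n)) (Y : Finset (Fin q)) : Matrix (↥X) (Fin p ⊕ ↥Y) ℝ :=
  fun i => Sum.elim (fun a => Q i.1 a) (fun b => U i.1 b.1)

section CauchyBinet

set_option linter.unusedSectionVars false

variable {R : Type*} [CommRing R] {κ ι : Type*} [Fintype κ] [Fintype ι] [DecidableEq κ]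
  [DecidableEq ι]

/-- Expansion of `det (F * G)` by multilinearity in the rows. -/
lemma det_mul_expand (F : Matrix κ ι R) (G : Matrix ι κ R) :
    (F * G).det = ∑ r : κ → ι, (∏ i, F i (r i)) * (G.submatrix r id).det := by
  have h : (F * G) = fun i => ∑ k : ι, F i k • G k := by
    ext i j
    simp [Matrix.mul_apply]
  have e1 := (Matrix.detRowAlternating : (κ → R) [⋀^κ]→ₗ[R] R).toMultilinearMap.map_sum
      (g := fun (i : κ) (k : ι) => F i k • G k)
  simp only [AlternatingMap.coe_multilinearMap] at e1
  rw [show (F * G).det = Matrix.detRowAlternating (F * G) from rfl, h, e1]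
  refine Finset.sum_congr rfl fun r _ => ?_
  have := (Matrix.detRowAlternating : (κ → R) [⋀^κ]→ₗ[R] R).toMultilinearMap.map_smul_univ
      (fun i => F i (r i)) (fun i => G (r i))
  simp only [AlternatingMap.coe_multilinearMap] at this
  rw [this]
  rfl

lemma term_eq_zero_of_not_injective (F : Matrix κ ι R) (G : Matrix ι κ R) {r : κ → ι}
    (hr : ¬ Function.Injective r) :
    (∏ i, F i (r i)) * (G.submatrix r id).det = 0 := by
  simp only [Function.Injective, not_forall] at hr
  obtain ⟨i, j, hij, hne⟩ := hr
  rw [Matrix.det_zero_of_row_eq hne (by ext k; simp [hij]), mul_zero]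

/-- Cauchy–Binet formula. -/
lemma cauchy_binet (F : Matrix κ ι R) (G : Matrix ι κ R) :
    (F * G).det = ∑ S ∈ Finset.powersetCard (Fintype.card κ) (Finset.univ : Finset ι),
      (F.submatrix id (Subtype.val : ↥S → ι) * G.submatrix (Subtype.val : ↥S → ι) id).det := by
  have inner : ∀ S ∈ Finset.powersetCard (Fintype.card κ) (Finset.univ : Finset ι),
      (F.submatrix id (Subtype.val : ↥S → ι) * G.submatrix (Subtype.val : ↥S → ι) id).det
      = ∑ r ∈ Finset.univ.filter (fun r : κ → ι => ∀ i, r i ∈ S),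
          (∏ i, F i (r i)) * (G.submatrix r id).det := by
    intro S _
    rw [det_mul_expand]
    refine Finset.sum_bij' (fun (r : κ → ↥S) _ => fun i => (r i : ι))
      (fun (r : κ → ι) hr => fun i => (⟨r i, (Finset.mem_filter.mp hr).2 i⟩ : ↥S))
      ?_ ?_ ?_ ?_ ?_
    · intro r _
      simp only [Finset.mem_filter, Finset.mem_univ, true_and]
      exact fun i => (r i).2
    · intro r hr; exact Finset.mem_univ _
    · intro r _; rfl
    · intro r _; rfl
    · intro r _; rfl
  rw [Finset.sum_congr rfl inner]
  rw [det_mul_expand]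
  rw [Finset.sum_comm' (s' := fun r => ((Finset.powersetCard (Fintype.card κ) Finset.univ).filter
        (fun S => ∀ i, r i ∈ S))) (t' := (Finset.univ : Finset (κ → ι)))
        (fun S r => by simp [Finset.mem_filter, and_comm])]
  refine Finset.sum_congr rfl fun r _ => ?_
  by_cases hr : Function.Injective r
  · have himg : Finset.univ.image r ∈ (Finset.powersetCard (Fintype.card κ)
        (Finset.univ : Finset ι)).filter (fun S => ∀ i, r i ∈ S) := by
      simp [Finset.mem_powersetCard, Finset.card_image_of_injective _ hr,
        Finset.mem_image]
    rw [Finset.sum_const, Finset.card_eq_one.mpr ⟨Finset.univ.image r, ?_⟩, one_smul]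
    ext S
    simp only [Finset.mem_filter, Finset.mem_powersetCard, Finset.mem_singleton]
    constructor
    · rintro ⟨⟨-, hcard⟩, hmem⟩
      refine (Finset.eq_of_subset_of_card_le (fun x hx => ?_) ?_).symm
      · obtain ⟨i, -, rfl⟩ := Finset.mem_image.mp hx
        exact hmem i
      · rw [hcard, Finset.card_image_of_injective _ hr, Finset.card_univ]
    · rintro rfl
      simpa using himg
  · rw [term_eq_zero_of_not_injective F G hr, Finset.sum_const, smul_zero]

end CauchyBinet

section Sign

lemma det_fromBlocks_zero_one_one_zero (p : ℕ) :
    (Matrix.fromBlocks (0 : Matrix (Fin p) (Fin p) ℝ) (1 : Matrix (Fin p) (Fin p) ℝ)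
      (1 : Matrix (Fin p) (Fin p) ℝ) (0 : Matrix (Fin p) (Fin p) ℝ)).det = (-1 : ℝ) ^ p := by
  set B1 : Matrix (Fin p ⊕ Fin p) (Fin p ⊕ Fin p) ℝ := Matrix.fromBlocks 1 0 0 (-1) with hB1
  set B2 : Matrix (Fin p ⊕ Fin p) (Fin p ⊕ Fin p) ℝ := Matrix.fromBlocks 1 1 0 1 with hB2
  set B3 : Matrix (Fin p ⊕ Fin p) (Fin p ⊕ Fin p) ℝ := Matrix.fromBlocks 1 0 (-1) 1 with hB3
  have hfact : Matrix.fromBlocks (0 : Matrix (Fin p) (Fin p) ℝ) (1 : Matrix (Fin p) (Fin p) ℝ)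
      (1 : Matrix (Fin p) (Fin p) ℝ) (0 : Matrix (Fin p) (Fin p) ℝ) = B1 * B2 * B3 * B2 := by
    rw [hB1, hB2, hB3]
    simp only [Matrix.fromBlocks_multiply]
    norm_num
  rw [hfact, Matrix.det_mul, Matrix.det_mul, Matrix.det_mul, hB1, hB2, hB3,
    Matrix.det_fromBlocks_zero₂₁, Matrix.det_fromBlocks_zero₂₁,
    Matrix.det_fromBlocks_zero₁₂]
  simp [Matrix.det_neg]

lemma sign_sumComm_cast (p : ℕ) :
    ((Equiv.Perm.sign ((Equiv.sumComm (Fin p) (Fin p)) : Equiv.Perm (Fin p ⊕ Fin p)) : ℤ) : ℝ)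
      = (-1 : ℝ) ^ p := by
  have h1 : (Equiv.Perm.permMatrix ℝ
      ((Equiv.sumComm (Fin p) (Fin p)) : Equiv.Perm (Fin p ⊕ Fin p))) =
      Matrix.fromBlocks (0 : Matrix (Fin p) (Fin p) ℝ) (1 : Matrix (Fin p) (Fin p) ℝ)
        (1 : Matrix (Fin p) (Fin p) ℝ) (0 : Matrix (Fin p) (Fin p) ℝ) := by
    ext i j
    rcases i with a | a <;> rcases j with b | b <;>
      simp [Equiv.Perm.permMatrix, PEquiv.toMatrix_apply, Equiv.toPEquiv_apply,
        Matrix.one_apply, eq_comm]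
  have h2 := Matrix.det_permutation
    (σ := ((Equiv.sumComm (Fin p) (Fin p)) : Equiv.Perm (Fin p ⊕ Fin p))) (R := ℝ)
  rw [h1, det_fromBlocks_zero_one_one_zero] at h2
  exact_mod_cast h2.symm

lemma sign_pi_cast {X' Y' : Type*} [Fintype X'] [DecidableEq X'] [Fintype Y'] [DecidableEq Y']
    {p : ℕ} (f : X' ≃ (Fin p ⊕ Y')) :
    (((Equiv.Perm.sign
      (((Equiv.sumCongr f (Equiv.refl (Fin p))).trans
        ((((Equiv.sumCongr (Equiv.sumComm (Fin p) Y') (Equiv.refl (Fin p))).trans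
            (Equiv.sumAssoc Y' (Fin p) (Fin p))).trans
          ((Equiv.sumCongr (Equiv.refl Y') (Equiv.sumComm (Fin p) (Fin p))).trans
            (((Equiv.sumCongr (Equiv.sumComm (Fin p) Y') (Equiv.refl (Fin p))).trans
              (Equiv.sumAssoc Y' (Fin p) (Fin p))).symm))))).trans
        (Equiv.sumCongr f (Equiv.refl (Fin p))).symm)) : ℤ) : ℝ) = (-1 : ℝ) ^ p := by
  set η := ((Equiv.sumCongr (Equiv.sumComm (Fin p) Y') (Equiv.refl (Fin p))).trans
      (Equiv.sumAssoc Y' (Fin p) (Fin p)))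
  set mid : Equiv.Perm (Y' ⊕ (Fin p ⊕ Fin p)) :=
    Equiv.sumCongr (Equiv.refl Y') (Equiv.sumComm (Fin p) (Fin p))
  set c := Equiv.sumCongr f (Equiv.refl (Fin p))
  have h1 : Equiv.Perm.sign ((c.trans ((η.trans mid).trans η.symm)).trans c.symm)
      = Equiv.Perm.sign ((η.trans mid).trans η.symm) :=
    Equiv.Perm.sign_trans_trans_symm _ c
  have h2 : Equiv.Perm.sign ((η.trans mid).trans η.symm) = Equiv.Perm.sign mid :=
    Equiv.Perm.sign_trans_trans_symm mid η
  have h3 : Equiv.Perm.sign mid = Equiv.Perm.sign ((Equiv.sumComm (Fin p) (Fin p)) :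
      Equiv.Perm (Fin p ⊕ Fin p)) := by
    show Equiv.Perm.sign (Equiv.Perm.sumCongr (1 : Equiv.Perm Y')
      ((Equiv.sumComm (Fin p) (Fin p)) : Equiv.Perm (Fin p ⊕ Fin p))) = _
    rw [Equiv.Perm.sign_sumCongr]
    simp
  simp only [← Equiv.trans_assoc] at h1 h2 h3 ⊢
  rw [h1, h2, h3, sign_sumComm_cast]

end Sign

section Factors

/-- The first factor: `[[Q_X, U_X, 0],[0,0,I]]`. -/
def bigF {n p q : ℕ} (Q : Matrix (Fin n) (Fin p) ℝ) (U : Matrix (Fin n) (Fin q) ℝ)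
    (X : Finset (Fin n)) : Matrix (↥X ⊕ Fin p) (Fin p ⊕ (Fin q ⊕ Fin p)) ℝ :=
  fun i s => match i, s with
  | .inl x, .inl a => Q x.1 a
  | .inl x, .inr (.inl k) => U x.1 k
  | .inl _, .inr (.inr _) => 0
  | .inr _, .inl _ => 0
  | .inr _, .inr (.inl _) => 0
  | .inr b, .inr (.inr a) => if b = a then 1 else 0

/-- The second factor: `[[0, I],[Λ U_Xᵀ, 0],[Q_Xᵀ, 0]]`. -/
def bigG {n p q : ℕ} (Q : Matrix (Fin n) (Fin p) ℝ) (U : Matrix (Fin n) (Fin q) ℝ)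
    (lam : Fin q → ℝ) (X : Finset (Fin n)) :
    Matrix (Fin p ⊕ (Fin q ⊕ Fin p)) (↥X ⊕ Fin p) ℝ :=
  fun s j => match s, j with
  | .inl _, .inl _ => 0
  | .inl a, .inr b => if a = b then 1 else 0
  | .inr (.inl k), .inl x => lam k * U x.1 k
  | .inr (.inl _), .inr _ => 0
  | .inr (.inr a), .inl x => Q x.1 a
  | .inr (.inr _), .inr _ => 0

/-- The subset of inner indices corresponding to `Y`. -/
def phiY {p q : ℕ} (Y : Finset (Fin q)) : Finset (Fin p ⊕ (Fin q ⊕ Fin p)) :=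
  ((Finset.univ : Finset (Fin p)).image Sum.inl ∪
    Y.image (fun k => Sum.inr (Sum.inl k))) ∪
    (Finset.univ : Finset (Fin p)).image (fun a => Sum.inr (Sum.inr a))

@[simp] lemma mem_phiY_inl {p q : ℕ} (Y : Finset (Fin q)) (a : Fin p) :
    (Sum.inl a : Fin p ⊕ (Fin q ⊕ Fin p)) ∈ phiY Y := by
  simp [phiY]

@[simp] lemma mem_phiY_inr_inl {p q : ℕ} (Y : Finset (Fin q)) (k : Fin q) :
    (Sum.inr (Sum.inl k) : Fin p ⊕ (Fin q ⊕ Fin p)) ∈ phiY (p := p) Y ↔ k ∈ Y := by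
  simp [phiY]

@[simp] lemma mem_phiY_inr_inr {p q : ℕ} (Y : Finset (Fin q)) (a : Fin p) :
    (Sum.inr (Sum.inr a) : Fin p ⊕ (Fin q ⊕ Fin p)) ∈ phiY (p := p) Y := by
  simp [phiY]

lemma card_phiY {p q : ℕ} (Y : Finset (Fin q)) :
    (phiY (p := p) Y).card = p + Y.card + p := by
  rw [phiY, Finset.card_union_of_disjoint, Finset.card_union_of_disjoint]
  · rw [Finset.card_image_of_injective _ Sum.inl_injective,
      Finset.card_image_of_injective _ (fun a b h => by simpa using h),
      Finset.card_image_of_injective _ (fun a b h => by simpa using h),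
      Finset.card_univ, Fintype.card_fin]
  · simp [Finset.disjoint_left]
  · simp [Finset.disjoint_left]

lemma term_zero_col {n p q : ℕ} (Q : Matrix (Fin n) (Fin p) ℝ) (U : Matrix (Fin n) (Fin q) ℝ)
    (lam : Fin q → ℝ) (X : Finset (Fin n)) (S : Finset (Fin p ⊕ (Fin q ⊕ Fin p)))
    (a : Fin p) (ha : Sum.inl a ∉ S) :
    ((bigF Q U X).submatrix id (Subtype.val : ↥S → _) *
      (bigG Q U lam X).submatrix (Subtype.val : ↥S → _) id).det = 0 := by
  apply Matrix.det_eq_zero_of_column_eq_zero (Sum.inr a)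
  intro i
  rw [Matrix.mul_apply]
  apply Finset.sum_eq_zero
  rintro ⟨s, hs⟩ -
  have : bigG Q U lam X s (Sum.inr a) = 0 := by
    rcases s with b | k | b
    · simp only [bigG]
      rcases eq_or_ne b a with rfl | hba
      · exact absurd hs ha
      · simp [hba]
    · rfl
    · rfl
  simp [this]

lemma term_zero_row {n p q : ℕ} (Q : Matrix (Fin n) (Fin p) ℝ) (U : Matrix (Fin n) (Fin q) ℝ)
    (lam : Fin q → ℝ) (X : Finset (Fin n)) (S : Finset (Fin p ⊕ (Fin q ⊕ Fin p)))
    (a : Fin p) (ha : Sum.inr (Sum.inr a) ∉ S) :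
    ((bigF Q U X).submatrix id (Subtype.val : ↥S → _) *
      (bigG Q U lam X).submatrix (Subtype.val : ↥S → _) id).det = 0 := by
  apply Matrix.det_eq_zero_of_row_eq_zero (Sum.inr a)
  intro j
  rw [Matrix.mul_apply]
  apply Finset.sum_eq_zero
  rintro ⟨s, hs⟩ -
  have : bigF Q U X (Sum.inr a) s = 0 := by
    rcases s with b | k | b
    · rfl
    · rfl
    · simp only [bigF]
      rcases eq_or_ne a b with rfl | hab
      · exact absurd hs ha
      · simp [hab]
  simp [this]

end Factors

lemma per_Y {n p q : ℕ} (Q : Matrix (Fin n) (Fin p) ℝ) (U : Matrix (Fin n) (Fin q) ℝ)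
    (lam : Fin q → ℝ) (X : Finset (Fin n)) (m : ℕ) (hX : X.card = m)
    (Y : Finset (Fin q)) (hY : Y.card = m - p) (hpm : p ≤ m) :
    ((bigF Q U X).submatrix id (Subtype.val : ↥(phiY (p := p) Y) → _) *
      (bigG Q U lam X).submatrix (Subtype.val : ↥(phiY (p := p) Y) → _) id).det =
    (-1 : ℝ) ^ p *
      ((concatSub Q U X Y * (concatSub Q U X Y)ᵀ).det * ∏ k ∈ Y, lam k) := by
  classical
  have hcard : Fintype.card (↥X) = Fintype.card (Fin p ⊕ ↥Y) := by
    simp [Fintype.card_coe, hX, hY]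
    omega
  -- the equiv between X and Fin p ⊕ Y
  obtain ⟨f⟩ : Nonempty (↥X ≃ (Fin p ⊕ ↥Y)) := ⟨Fintype.equivOfCardEq hcard⟩
  -- embedding of (Fin p ⊕ Y) ⊕ Fin p into the subtype of phiY
  let emb : (Fin p ⊕ ↥Y) ⊕ Fin p → ↥(phiY (p := p) Y) := fun z => match z with
    | .inl (.inl a) => ⟨.inl a, by simp⟩
    | .inl (.inr y) => ⟨.inr (.inl y.1), by simp [y.2]⟩
    | .inr a => ⟨.inr (.inr a), by simp⟩
  have hembinj : Function.Injective emb := by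
    rintro (⟨a | y⟩ | a) (⟨b | z⟩ | b) h <;>
      simp only [emb, Subtype.mk.injEq, Sum.inl.injEq, Sum.inr.injEq] at h <;>
      first
        | rfl
        | (rw [Subtype.ext h])
        | (exact absurd h (by simp))
        | (cases h; rfl)
        | (rw [Subtype.ext h])
  have hembbij : Function.Bijective emb := by
    rw [Fintype.bijective_iff_injective_and_card]
    refine ⟨hembinj, ?_⟩
    simp [Fintype.card_coe, card_phiY, hY]
  let e : (↥X ⊕ Fin p) ≃ ↥(phiY (p := p) Y) :=
    (Equiv.sumCongr f (Equiv.refl (Fin p))).trans (Equiv.ofBijective emb hembbij)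
  -- the permutation
  let pi : Equiv.Perm (↥X ⊕ Fin p) :=
    ((Equiv.sumCongr f (Equiv.refl (Fin p))).trans
        ((((Equiv.sumCongr (Equiv.sumComm (Fin p) ↥Y) (Equiv.refl (Fin p))).trans
            (Equiv.sumAssoc ↥Y (Fin p) (Fin p))).trans
          ((Equiv.sumCongr (Equiv.refl ↥Y) (Equiv.sumComm (Fin p) (Fin p))).trans
            (((Equiv.sumCongr (Equiv.sumComm (Fin p) ↥Y) (Equiv.refl (Fin p))).trans
              (Equiv.sumAssoc ↥Y (Fin p) (Fin p))).symm))))).trans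
      (Equiv.sumCongr f (Equiv.refl (Fin p))).symm
  have hpi_inl_inl : ∀ (x : ↥X) (a : Fin p), f x = Sum.inl a → pi (Sum.inl x) = Sum.inr a := by
    intro x a hfx
    simp [pi, hfx]
  have hpi_inl_inr : ∀ (x : ↥X) (y : ↥Y), f x = Sum.inr y → pi (Sum.inl x) = Sum.inl x := by
    intro x y hfx
    have : f.symm (Sum.inr y) = x := by rw [← hfx, Equiv.symm_apply_apply]
    simp [pi, hfx, this]
  have hpi_inr : ∀ (a : Fin p), pi (Sum.inr a) = Sum.inl (f.symm (Sum.inl a)) := by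
    intro a
    simp [pi]
  -- the key square matrix
  set Cf : Matrix (↥X) (↥X) ℝ := (concatSub Q U X Y).submatrix id ⇑f with hCf
  set A : Matrix (↥X ⊕ Fin p) (↥X ⊕ Fin p) ℝ :=
    Matrix.fromBlocks Cf 0 0 (1 : Matrix (Fin p) (Fin p) ℝ) with hA
  -- the diagonal scaling
  set dd : (↥X ⊕ Fin p) → ℝ :=
    Sum.elim (fun x => Sum.elim (fun _ => 1) (fun y => lam y.1) (f x)) (fun _ => 1) with hdd
  -- e applied
  have he_inl : ∀ x : ↥X, (e (Sum.inl x) : Fin p ⊕ (Fin q ⊕ Fin p))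
      = Sum.elim (fun a => Sum.inl a) (fun y : ↥Y => Sum.inr (Sum.inl y.1)) (f x) := by
    intro x
    rcases hfx : f x with a | y <;> simp [e, emb, hfx]
  have he_inr : ∀ a : Fin p, (e (Sum.inr a) : Fin p ⊕ (Fin q ⊕ Fin p))
      = Sum.inr (Sum.inr a) := by
    intro a
    simp [e, emb]
  -- computation of the first factor
  have hFA : ((bigF Q U X).submatrix id (Subtype.val : ↥(phiY (p := p) Y) → _)).submatrix id ⇑e
      = A := by
    ext i j
    rcases j with x' | a
    · rw [Matrix.submatrix_apply, Matrix.submatrix_apply, id_eq, he_inl x']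
      rcases hfx : f x' with a' | y <;> rcases i with x | b <;>
        simp [bigF, hA, hCf, concatSub, Matrix.fromBlocks, hfx]
    · rw [Matrix.submatrix_apply, Matrix.submatrix_apply, id_eq, he_inr a]
      rcases i with x | b <;> simp [bigF, hA, Matrix.fromBlocks, Matrix.one_apply]
  -- computation of the second factor
  have hGB : ((bigG Q U lam X).submatrix (Subtype.val : ↥(phiY (p := p) Y) → _) id).submatrix ⇑e id
      = Matrix.diagonal dd * (A.submatrix id ⇑pi)ᵀ := by
    ext i j
    rw [Matrix.diagonal_mul, Matrix.transpose_apply, Matrix.submatrix_apply,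
      Matrix.submatrix_apply, Matrix.submatrix_apply]
    rcases i with x | a
    · rcases hfx : f x with a' | y
      · rw [he_inl x, hfx, hpi_inl_inl x a' hfx]
        rcases j with x' | b <;> simp [bigG, hA, Matrix.fromBlocks, hdd, hfx, Matrix.one_apply, eq_comm]
      · rw [he_inl x, hfx, hpi_inl_inr x y hfx]
        rcases j with x' | b <;>
          simp [bigG, hA, hCf, Matrix.fromBlocks, hdd, hfx, concatSub]
    · rw [he_inr a, hpi_inr a]
      rcases j with x' | b <;>
        · simp [bigG, hA, hCf, Matrix.fromBlocks, hdd, concatSub]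
  -- assemble
  have hsplit : (bigF Q U X).submatrix id (Subtype.val : ↥(phiY (p := p) Y) → _) *
      (bigG Q U lam X).submatrix (Subtype.val : ↥(phiY (p := p) Y) → _) id
      = (((bigF Q U X).submatrix id (Subtype.val : ↥(phiY (p := p) Y) → _)).submatrix id ⇑e) *
        (((bigG Q U lam X).submatrix (Subtype.val : ↥(phiY (p := p) Y) → _) id).submatrix ⇑e id) := by
    rw [Matrix.submatrix_mul_equiv, Matrix.submatrix_id_id]
  rw [hsplit, hFA, hGB, Matrix.det_mul, Matrix.det_mul, Matrix.det_diagonal,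
    Matrix.det_transpose, Matrix.det_permute']
  have hsign : ((Equiv.Perm.sign pi : ℤ) : ℝ) = (-1 : ℝ) ^ p := sign_pi_cast f
  have hprod : (∏ i, dd i) = ∏ k ∈ Y, lam k := by
    rw [hdd, Fintype.prod_sum_type]
    simp only [Sum.elim_inl, Sum.elim_inr, Finset.prod_const_one, mul_one]
    rw [Equiv.prod_comp f (fun z => Sum.elim (fun _ => (1:ℝ)) (fun y : ↥Y => lam y.1) z),
      Fintype.prod_sum_type]
    simp [Finset.prod_attach Y lam]
  have hdetA : A.det = Cf.det := by
    rw [hA, Matrix.det_fromBlocks_zero₂₁, Matrix.det_one, mul_one]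
  have hCC : concatSub Q U X Y * (concatSub Q U X Y)ᵀ = Cf * Cfᵀ := by
    rw [hCf, Matrix.transpose_submatrix, Matrix.submatrix_mul_equiv, Matrix.submatrix_id_id]
  rw [hprod, hdetA, hCC, Matrix.det_mul, Matrix.det_transpose]
  push_cast [hsign]
  ring

/-- Generalized Cauchy–Binet formula for saddle-point matrices. Here
`det (B * Bᵀ)` expresses `det ([Q_{X,:}  Ũ_{X,Y}])²` (the factor is square since
`|X| = m = p + (m-p)`). -/
theorem generalized_cauchy_binet {n p q : ℕ}
    (L : Matrix (Fin n) (Fin n) ℝ) (hL : Lᵀ = L)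
    (V : Matrix (Fin n) (Fin p) ℝ) (hV : V.rank = p)
    (hCPSD : ∀ x : Fin n → ℝ, Vᵀ.mulVec x = 0 → 0 ≤ x ⬝ᵥ L.mulVec x)
    (Q : Matrix (Fin n) (Fin p) ℝ) (hQQ : Qᵀ * Q = 1)
    (hspan : ∃ R : Matrix (Fin p) (Fin p) ℝ, V = Q * R)
    (U : Matrix (Fin n) (Fin q) ℝ) (hUU : Uᵀ * U = 1)
    (lam : Fin q → ℝ) (hlam : ∀ i, lam i ≠ 0)
    (hdecomp : (1 - Q * Qᵀ) * L * (1 - Q * Qᵀ) = U * Matrix.diagonal lam * Uᵀ)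
    (hq : ((1 - Q * Qᵀ) * L * (1 - Q * Qᵀ)).rank = q)
    (X : Finset (Fin n)) (m : ℕ) (hX : X.card = m) (hpm : p ≤ m) (hm : m ≤ p + q) :
    (-1 : ℝ) ^ p * (saddleSub L V X).det =
      (Vᵀ * V).det *
        ∑ Y : {s : Finset (Fin q) // s.card = m - p},
          (concatSub Q U X Y.1 * (concatSub Q U X Y.1)ᵀ).det * ∏ i ∈ Y.1, lam i := by
  classical
  obtain ⟨Rm, hRm⟩ := hspan
  set inc : ↥X → Fin n := fun i => i.1 with hinc
  set Qx : Matrix ↥X (Fin p) ℝ := Q.submatrix inc id with hQx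
  set Lx : Matrix ↥X ↥X ℝ := L.submatrix inc inc with hLxd
  have hVx : V.submatrix inc id = Qx * Rm := by
    rw [hRm, Matrix.submatrix_mul _ _ inc id id Function.bijective_id, Matrix.submatrix_id_id]
  -- step 1: pull out Rm
  have hsaddle : saddleSub L V X =
      Matrix.fromBlocks 1 0 0 Rmᵀ * Matrix.fromBlocks Lx Qx Qxᵀ 0 *
        Matrix.fromBlocks 1 0 0 Rm := by
    rw [Matrix.fromBlocks_multiply, Matrix.fromBlocks_multiply]
    unfold saddleSub
    rw [hVx]
    simp [Matrix.transpose_mul, Matrix.mul_assoc]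
    rfl
  have hdet1 : (saddleSub L V X).det = Rm.det ^ 2 * (Matrix.fromBlocks Lx Qx Qxᵀ 0).det := by
    rw [hsaddle, Matrix.det_mul, Matrix.det_mul, Matrix.det_fromBlocks_zero₂₁,
      Matrix.det_fromBlocks_zero₂₁, Matrix.det_one, Matrix.det_transpose]
    ring
  -- step 2: triangular trick
  set Mr : Matrix (Fin p) ↥X ℝ := (Qᵀ*L*Q*Qᵀ - Qᵀ*L).submatrix id inc with hMr
  set Ml : Matrix ↥X (Fin p) ℝ := (-(L*Q)).submatrix inc id with hMl
  have hfull : U * Matrix.diagonal lam * Uᵀ = L + Q * (Qᵀ*L*Q*Qᵀ - Qᵀ*L) + (-(L*Q)) * Qᵀ := by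
    rw [← hdecomp]
    noncomm_ring
    simp only [Matrix.mul_add, Matrix.mul_smul, Matrix.smul_mul, Matrix.mul_assoc]
    abel
  set Lt : Matrix ↥X ↥X ℝ := (U * Matrix.diagonal lam * Uᵀ).submatrix inc inc with hLtd
  have hLt : Lt = Lx + Qx * Mr + Ml * Qxᵀ := by
    rw [hLtd, hfull]
    ext i j
    simp [Matrix.mul_apply, Matrix.add_apply, Matrix.sub_apply, Matrix.neg_apply,
      Matrix.submatrix_apply, Matrix.transpose_apply, hQx, hMr, hMl, hLxd]
  have htri : Matrix.fromBlocks 1 Ml 0 1 * Matrix.fromBlocks Lx Qx Qxᵀ 0 *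
      Matrix.fromBlocks 1 0 Mr 1 = Matrix.fromBlocks Lt Qx Qxᵀ 0 := by
    rw [Matrix.fromBlocks_multiply, Matrix.fromBlocks_multiply, hLt]
    congr 1 <;> simp [Matrix.mul_assoc] <;> abel
  have hdet2 : (Matrix.fromBlocks Lx Qx Qxᵀ 0).det = (Matrix.fromBlocks Lt Qx Qxᵀ 0).det := by
    rw [← htri, Matrix.det_mul, Matrix.det_mul, Matrix.det_fromBlocks_zero₂₁,
      Matrix.det_fromBlocks_zero₁₂, Matrix.det_one, Matrix.det_one]
    ring
  -- step 3: the factorization F * G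
  have hFGQ : bigF Q U X * bigG Q U lam X = Matrix.fromBlocks Lt Qx Qxᵀ 0 := by
    ext i j
    rcases i with x | a <;> rcases j with x' | b <;>
      simp only [Matrix.mul_apply, Fintype.sum_sum_type, bigF, bigG,
        Matrix.fromBlocks_apply₁₁, Matrix.fromBlocks_apply₁₂, Matrix.fromBlocks_apply₂₁,
        Matrix.fromBlocks_apply₂₂, hLtd, hQx,
        Matrix.submatrix_apply, Matrix.transpose_apply, Sum.elim_inl, Sum.elim_inr,
        Matrix.zero_apply, id_eq, mul_zero, zero_mul,
        Finset.sum_const_zero, add_zero, zero_add, ite_mul, one_mul, zero_add,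
        Finset.mem_univ, if_true, mul_ite, mul_one, mul_zero]
    · refine Finset.sum_congr rfl fun k _ => ?_
      rw [show (∑ j : Fin q, U (inc x) j * Matrix.diagonal lam j k) = U (inc x) k * lam k by
        simp [Matrix.diagonal_apply, Finset.sum_ite_eq']]
      ring
    · simp [hinc]
    · simp [hinc]
    · simp
  -- step 4: Cauchy–Binet
  have hcard : Fintype.card (↥X ⊕ Fin p) = m + p := by simp [hX]
  have hCB := cauchy_binet (bigF Q U X) (bigG Q U lam X)
  rw [hcard] at hCB
  -- step 5: restrict to good subsets
  have hrestrict :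
      ∑ S ∈ Finset.powersetCard (m + p) (Finset.univ : Finset (Fin p ⊕ (Fin q ⊕ Fin p))),
        ((bigF Q U X).submatrix id (Subtype.val : ↥S → _) *
          (bigG Q U lam X).submatrix (Subtype.val : ↥S → _) id).det
      = ∑ S ∈ (Finset.powersetCard (m + p)
            (Finset.univ : Finset (Fin p ⊕ (Fin q ⊕ Fin p)))).filter
            (fun S => (∀ a : Fin p, Sum.inl a ∈ S) ∧ (∀ a : Fin p, Sum.inr (Sum.inr a) ∈ S)),
        ((bigF Q U X).submatrix id (Subtype.val : ↥S → _) *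
          (bigG Q U lam X).submatrix (Subtype.val : ↥S → _) id).det := by
    refine (Finset.sum_filter_of_ne ?_).symm
    intro S _ hne
    by_contra hbad
    rcases not_and_or.mp hbad with h | h
    · push_neg at h
      obtain ⟨a, ha⟩ := h
      exact hne (term_zero_col Q U lam X S a ha)
    · push_neg at h
      obtain ⟨a, ha⟩ := h
      exact hne (term_zero_row Q U lam X S a ha)
  -- step 6: biject good subsets with Y's
  have hbij :
      ∑ S ∈ (Finset.powersetCard (m + p)
            (Finset.univ : Finset (Fin p ⊕ (Fin q ⊕ Fin p)))).filter
            (fun S => (∀ a : Fin p, Sum.inl a ∈ S) ∧ (∀ a : Fin p, Sum.inr (Sum.inr a) ∈ S)),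
        ((bigF Q U X).submatrix id (Subtype.val : ↥S → _) *
          (bigG Q U lam X).submatrix (Subtype.val : ↥S → _) id).det
      = ∑ Y : {s : Finset (Fin q) // s.card = m - p},
          (-1 : ℝ) ^ p *
            ((concatSub Q U X Y.1 * (concatSub Q U X Y.1)ᵀ).det * ∏ k ∈ Y.1, lam k) := by
    refine Finset.sum_bij'
      (fun S hS => (⟨Finset.univ.filter (fun k => Sum.inr (Sum.inl k) ∈ S), ?_⟩ :
        {s : Finset (Fin q) // s.card = m - p}))
      (fun Y _ => phiY Y.1) ?_ ?_ ?_ ?_ ?_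
    · -- card of the extracted Y
      simp only [Finset.mem_filter, Finset.mem_powersetCard] at hS
      obtain ⟨⟨-, hcardS⟩, hgood⟩ := hS
      have hSeq : S = phiY (Finset.univ.filter (fun k => Sum.inr (Sum.inl k) ∈ S)) := by
        ext s
        rcases s with a | k | a
        · simp [hgood.1 a]
        · simp
        · simp [hgood.2 a]
      rw [hSeq, card_phiY] at hcardS
      simp only [Finset.card_filter] at hcardS ⊢
      omega
    · intro S hS
      exact Finset.mem_univ _
    · intro Y hY
      simp only [Finset.mem_filter, Finset.mem_powersetCard]
      refine ⟨⟨Finset.subset_univ _, ?_⟩, fun a => by simp, fun a => by simp⟩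
      rw [card_phiY, Y.2]
      omega
    · intro S hS
      simp only [Finset.mem_filter, Finset.mem_powersetCard] at hS
      obtain ⟨⟨-, hcardS⟩, hgood⟩ := hS
      ext s
      rcases s with a | k | a
      · simp [hgood.1 a]
      · simp
      · simp [hgood.2 a]
    · intro Y hY
      ext k
      simp
    · intro S hS
      simp only [Finset.mem_filter, Finset.mem_powersetCard] at hS
      obtain ⟨⟨-, hcardS⟩, hgood⟩ := hS
      have hSeq : S = phiY (Finset.univ.filter (fun k => Sum.inr (Sum.inl k) ∈ S)) := by
        ext s
        rcases s with a | k | a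
        · simp [hgood.1 a]
        · simp
        · simp [hgood.2 a]
      have hYcard : (Finset.univ.filter
          (fun k => Sum.inr (Sum.inl k) ∈ S) : Finset (Fin q)).card = m - p := by
        have := hcardS
        rw [hSeq, card_phiY] at this
        omega
      conv_lhs => rw [hSeq]
      exact per_Y Q U lam X m hX _ hYcard hpm
  -- final assembly
  have hVV : (Vᵀ * V).det = Rm.det ^ 2 := by
    have : Vᵀ * V = Rmᵀ * Rm := by
      rw [hRm, Matrix.transpose_mul]
      calc Rmᵀ * Qᵀ * (Q * Rm) = Rmᵀ * (Qᵀ * Q) * Rm := by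
            simp only [Matrix.mul_assoc]
        _ = Rmᵀ * Rm := by rw [hQQ, Matrix.mul_one]
    rw [this, Matrix.det_mul, Matrix.det_transpose]
    ring
  rw [hdet1, hdet2, ← hFGQ, hCB, hrestrict, hbij, hVV, ← Finset.mul_sum]
  have hsq : (-1 : ℝ) ^ p * (-1 : ℝ) ^ p = 1 := by
    rw [← pow_add, ← two_mul, pow_mul]
    norm_num
  calc (-1 : ℝ) ^ p * (Rm.det ^ 2 * ((-1 : ℝ) ^ p *
        ∑ Y : {s : Finset (Fin q) // s.card = m - p},
          (concatSub Q U X Y.1 * (concatSub Q U X Y.1)ᵀ).det * ∏ k ∈ Y.1, lam k))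
      = ((-1 : ℝ) ^ p * (-1 : ℝ) ^ p) * (Rm.det ^ 2 *
        ∑ Y : {s : Finset (Fin q) // s.card = m - p},
          (concatSub Q U X Y.1 * (concatSub Q U X Y.1)ᵀ).det * ∏ k ∈ Y.1, lam k) := by ring
    _ = _ := by rw [hsq, one_mul]
end

section
/- Let (L,V) be a nonnegative pair with L̃ = (I−QQᵀ)L(I−QQᵀ) as above, where Q is an orthonormal basis of span(V ∈ ℝ^{n×p}). Then for any m with p ≤ m ≤ n: (−1)^p · Σ_{X⊆{1,...,n}, |X|=m} det([[L_X, V_{X,:}],[(V_{X,:})ᵀ, 0]]) = e_{m−p}(L̃) · det(VᵀV), where e_k(L̃) denotes the k-th elementary symmetric polynomial of the eigenvalues of L̃. -/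
open Matrix

/-- `e k M`: the `k`-th elementary symmetric polynomial of the eigenvalues of `M`,
expressed as the sum of all `k × k` principal minors of `M`. -/
noncomputable def esp {n : ℕ} (k : ℕ) (M : Matrix (Fin n) (Fin n) ℝ) : ℝ :=
  ∑ S : {s : Finset (Fin n) // s.card = k},
    (M.submatrix (fun i : ↥S.1 => i.1) (fun i : ↥S.1 => i.1)).det


lemma aux_det_ite_one {ι : Type*} [Fintype ι] [DecidableEq ι] (M : Matrix ι ι ℝ) (S : Finset ι) :
    (Matrix.of fun i j => if i ∈ S then (1 : Matrix ι ι ℝ) i j else M i j).det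
      = (M.submatrix (fun i : {x // x ∉ S} => i.1) (fun i : {x // x ∉ S} => i.1)).det := by
  classical
  have h : (Matrix.of fun i j => if i ∈ S then (1 : Matrix ι ι ℝ) i j else M i j).submatrix
        (Equiv.sumCompl (· ∈ S)) (Equiv.sumCompl (· ∈ S))
      = Matrix.fromBlocks 1 0
          (M.submatrix (fun i : {x // x ∉ S} => i.1) (fun j : {x // x ∈ S} => j.1))
          (M.submatrix (fun i : {x // x ∉ S} => i.1) (fun i : {x // x ∉ S} => i.1)) := by
    ext i j
    rcases i with i | i <;> rcases j with j | j
    · simp only [Matrix.submatrix_apply, Equiv.sumCompl_apply_inl, Matrix.of_apply, i.2, if_true,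
        Matrix.fromBlocks_apply₁₁, Matrix.one_apply, Subtype.ext_iff]
    · have : i.1 ≠ j.1 := fun h => j.2 (h ▸ i.2)
      simp [Matrix.one_apply, i.2, this]
    · simp [i.2]
    · simp [i.2]
  rw [← Matrix.det_submatrix_equiv_self (Equiv.sumCompl (· ∈ S)), h,
    Matrix.det_fromBlocks_zero₁₂, Matrix.det_one, one_mul]


lemma aux_det_expand {ι : Type*} [Fintype ι] [DecidableEq ι] (z : ℝ) (U : Finset ι)
    (M : Matrix ι ι ℝ) :
    (Matrix.of fun i j => M i j + if i ∈ U then z * (1 : Matrix ι ι ℝ) i j else 0).det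
      = ∑ S ∈ U.powerset, z ^ S.card *
          (Matrix.of fun i j => if i ∈ S then (1 : Matrix ι ι ℝ) i j else M i j).det := by
  classical
  induction U using Finset.induction_on generalizing M with
  | empty =>
    simp only [Finset.powerset_empty, Finset.sum_singleton, Finset.card_empty, pow_zero, one_mul,
      Finset.notMem_empty, if_false]
    congr 1
    ext i j
    simp
  | @insert a U ha ih =>
    have key : (Matrix.of fun i j => M i j + if i ∈ insert a U then z * (1 : Matrix ι ι ℝ) i j else 0)
        = Matrix.updateRow (Matrix.of fun i j => M i j + if i ∈ U then z * (1 : Matrix ι ι ℝ) i j else 0) a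
            (fun j => (M a j) + z * (1 : Matrix ι ι ℝ) a j) := by
      ext i j
      by_cases hi : i = a
      · subst hi; simp [ha]
      · simp [Matrix.updateRow_apply, hi, Finset.mem_insert]
    have h1 : Matrix.updateRow (Matrix.of fun i j => M i j + if i ∈ U then z * (1 : Matrix ι ι ℝ) i j else 0) a
            (fun j => M a j)
        = (Matrix.of fun i j => M i j + if i ∈ U then z * (1 : Matrix ι ι ℝ) i j else 0) := by
      ext i j
      by_cases hi : i = a
      · subst hi; simp [ha]
      · simp [Matrix.updateRow_apply, hi]
    have h2 : Matrix.updateRow (Matrix.of fun i j => M i j + if i ∈ U then z * (1 : Matrix ι ι ℝ) i j else 0) a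
            (fun j => (1 : Matrix ι ι ℝ) a j)
        = (Matrix.of fun i j => (Matrix.updateRow M a ((1 : Matrix ι ι ℝ) a)) i j
            + if i ∈ U then z * (1 : Matrix ι ι ℝ) i j else 0) := by
      ext i j
      by_cases hi : i = a
      · subst hi; simp [ha]
      · simp [Matrix.updateRow_apply, hi]
    have hsmul : (fun j => (M a j) + z * (1 : Matrix ι ι ℝ) a j)
        = (fun j => M a j) + z • ((1 : Matrix ι ι ℝ) a) := by
      funext j; simp [smul_eq_mul]
    rw [key, hsmul, Matrix.det_updateRow_add, Matrix.det_updateRow_smul, h1, h2, ih, ih]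
    have hKins : ∀ S : Finset ι, S ⊆ U →
        (Matrix.of fun i j => if i ∈ S then (1 : Matrix ι ι ℝ) i j
            else (Matrix.updateRow M a ((1 : Matrix ι ι ℝ) a)) i j)
        = (Matrix.of fun i j => if i ∈ insert a S then (1 : Matrix ι ι ℝ) i j else M i j) := by
      intro S hS
      ext i j
      by_cases hiS : i ∈ S
      · simp [hiS, Finset.mem_insert_of_mem hiS]
      · by_cases hia : i = a
        · subst hia; simp [hiS, Matrix.updateRow_apply]
        · simp [hiS, hia, Matrix.updateRow_apply, Finset.mem_insert]
    rw [Finset.sum_powerset_insert ha]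
    congr 1
    rw [Finset.mul_sum]
    apply Finset.sum_congr rfl
    intro S hS
    rw [Finset.mem_powerset] at hS
    have haS : a ∉ S := fun h => ha (hS h)
    rw [hKins S hS, Finset.card_insert_of_notMem haS, pow_succ]
    ring


lemma aux_minor_compl {ι : Type*} [Fintype ι] [DecidableEq ι] (A : Matrix ι ι ℝ) (S : Finset ι) :
    (A.submatrix (fun i : {x // x ∉ S} => i.1) (fun i : {x // x ∉ S} => i.1)).det
      = (A.submatrix (fun i : ↥(Sᶜ : Finset ι) => i.1) (fun i : ↥(Sᶜ : Finset ι) => i.1)).det := by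
  calc (A.submatrix (fun i : {x // x ∉ S} => i.1) (fun i : {x // x ∉ S} => i.1)).det
      = (((A.submatrix (fun i : ↥(Sᶜ : Finset ι) => i.1)
            (fun i : ↥(Sᶜ : Finset ι) => i.1))).submatrix
            (Equiv.subtypeEquivRight (p := fun x => x ∉ S) (q := fun x => x ∈ Sᶜ) (fun x => by simp))
            (Equiv.subtypeEquivRight (p := fun x => x ∉ S) (q := fun x => x ∈ Sᶜ) (fun x => by simp))).det := by
        rw [Matrix.submatrix_submatrix]
        congr 1 <;> funext i <;> simp [Equiv.subtypeEquivRight]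
    _ = _ := Matrix.det_submatrix_equiv_self _ _

lemma aux_det_smul_one_add {ι : Type*} [Fintype ι] [DecidableEq ι] (z : ℝ) (A : Matrix ι ι ℝ) :
    (z • (1 : Matrix ι ι ℝ) + A).det
      = ∑ X : Finset ι, z ^ (Fintype.card ι - X.card) *
          (A.submatrix (fun i : ↥X => i.1) (fun i : ↥X => i.1)).det := by
  have h0 : (z • (1 : Matrix ι ι ℝ) + A)
      = Matrix.of fun i j => A i j
          + if i ∈ (Finset.univ : Finset ι) then z * (1 : Matrix ι ι ℝ) i j else 0 := by
    ext i j
    simp [add_comm]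
  rw [h0, aux_det_expand]
  simp_rw [aux_det_ite_one, aux_minor_compl]
  rw [Finset.powerset_univ]
  refine Fintype.sum_bijective Compl.compl (Function.Involutive.bijective compl_involutive) _ _ ?_
  intro S
  rw [Finset.card_compl, Nat.sub_sub_self (Finset.card_le_univ S)]

section saddle
variable {n p : ℕ} (L : Matrix (Fin n) (Fin n) ℝ) (V : Matrix (Fin n) (Fin p) ℝ)

abbrev inlEmb (n p : ℕ) : Fin n ↪ Fin n ⊕ Fin p := ⟨Sum.inl, Sum.inl_injective⟩

lemma saddleSub_eq (X : Finset (Fin n)) :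
    saddleSub L V X = (Matrix.fromBlocks L V Vᵀ (0 : Matrix (Fin p) (Fin p) ℝ)).submatrix
      (Sum.map (fun i : ↥X => i.1) id) (Sum.map (fun i : ↥X => i.1) id) := by
  ext i j
  rcases i with i | i <;> rcases j with j | j <;> rfl

def complEquiv (T : Finset (Fin n)) :
    ↥(Tᶜ : Finset (Fin n)) ⊕ Fin p ≃ {x : Fin n ⊕ Fin p // x ∉ T.map (inlEmb n p)} where
  toFun := Sum.elim (fun a => ⟨Sum.inl a.1, by simpa using Finset.mem_compl.mp a.2⟩)
    (fun b => ⟨Sum.inr b, by simp⟩)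
  invFun x := match x with
    | ⟨Sum.inl a, h⟩ => Sum.inl ⟨a, Finset.mem_compl.mpr (by simpa using h)⟩
    | ⟨Sum.inr b, _⟩ => Sum.inr b
  left_inv x := by rcases x with a | b <;> rfl
  right_inv x := by rcases x with ⟨a | b, h⟩ <;> rfl

lemma aux_saddle_minor (T : Finset (Fin n)) :
    ((Matrix.fromBlocks L V Vᵀ (0 : Matrix (Fin p) (Fin p) ℝ)).submatrix
        (fun i : {x : Fin n ⊕ Fin p // x ∉ T.map (inlEmb n p)} => i.1)
        (fun i : {x : Fin n ⊕ Fin p // x ∉ T.map (inlEmb n p)} => i.1)).det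
      = (saddleSub L V Tᶜ).det := by
  rw [← Matrix.det_submatrix_equiv_self (complEquiv (p := p) T)]
  congr 1
  ext i j
  rcases i with i | i <;> rcases j with j | j <;> rfl

lemma aux_saddle_expand (z : ℝ) :
    (Matrix.fromBlocks (z • 1 + L) V Vᵀ (0 : Matrix (Fin p) (Fin p) ℝ)).det
      = ∑ X : Finset (Fin n), z ^ (n - X.card) * (saddleSub L V X).det := by
  classical
  set M₀ := Matrix.fromBlocks L V Vᵀ (0 : Matrix (Fin p) (Fin p) ℝ) with hM₀
  set U := (Finset.univ : Finset (Fin n)).map (inlEmb n p) with hU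
  have h0 : Matrix.fromBlocks (z • 1 + L) V Vᵀ (0 : Matrix (Fin p) (Fin p) ℝ)
      = Matrix.of fun i j => M₀ i j + if i ∈ U then z * (1 : Matrix (Fin n ⊕ Fin p) (Fin n ⊕ Fin p) ℝ) i j else 0 := by
    ext i j
    rcases i with i | i <;> rcases j with j | j <;>
      simp [hM₀, hU, Matrix.one_apply, add_comm]
  have hrec : ∀ S : Finset (Fin n ⊕ Fin p), S ∈ U.powerset →
      S = (S.preimage Sum.inl Sum.inl_injective.injOn).map (inlEmb n p) := by
    intro S hS
    rw [Finset.mem_powerset, hU] at hS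
    ext x
    simp only [Finset.mem_map, Finset.mem_preimage]
    constructor
    · intro hx
      rcases Finset.mem_map.mp (hS hx) with ⟨a, _, rfl⟩
      exact ⟨a, hx, rfl⟩
    · rintro ⟨a, ha, rfl⟩; exact ha
  rw [h0, aux_det_expand]
  simp_rw [aux_det_ite_one]
  refine Finset.sum_bij'
    (i := fun S (_ : S ∈ U.powerset) => (S.preimage Sum.inl Sum.inl_injective.injOn)ᶜ)
    (j := fun X (_ : X ∈ (Finset.univ : Finset (Finset (Fin n)))) => Xᶜ.map (inlEmb n p))
    (hi := fun S hS => Finset.mem_univ _)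
    (hj := fun X _ => Finset.mem_powerset.mpr (by
      rw [hU]; exact Finset.map_subset_map.mpr (Finset.subset_univ _)))
    ?_ ?_ ?_
  · intro S hS
    rw [compl_compl, ← hrec S hS]
  · intro X _
    rw [show (Finset.map (inlEmb n p) Xᶜ).preimage Sum.inl Sum.inl_injective.injOn
      = (Finset.map (inlEmb n p) Xᶜ).preimage (⇑(inlEmb n p)) ((inlEmb n p).injective.injOn)
      from rfl, Finset.preimage_map, compl_compl]
  · intro S hS
    have hcard : (S.preimage Sum.inl Sum.inl_injective.injOn).card = S.card := by
      conv_rhs => rw [hrec S hS]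
      exact (Finset.card_map _).symm
    have hmin := aux_saddle_minor L V (S.preimage Sum.inl Sum.inl_injective.injOn)
    rw [← hrec S hS] at hmin
    have hle : S.card ≤ n := by
      rw [← hcard]
      simpa using Finset.card_le_univ (S.preimage Sum.inl Sum.inl_injective.injOn)
    rw [hmin, Finset.card_compl, Fintype.card_fin, hcard, Nat.sub_sub_self hle]

end saddle


lemma aux_star {n p : ℕ} (L : Matrix (Fin n) (Fin n) ℝ) (V Q : Matrix (Fin n) (Fin p) ℝ)
    (hQQ : Qᵀ * Q = 1) (R : Matrix (Fin p) (Fin p) ℝ) (hR : V = Q * R)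
    (z : ℝ) (hz : z ≠ 0) :
    z ^ p * (-1 : ℝ) ^ p * (Matrix.fromBlocks (z • 1 + L) V Vᵀ (0 : Matrix (Fin p) (Fin p) ℝ)).det
      = (Vᵀ * V).det * (z • 1 + (1 - Q * Qᵀ) * L * (1 - Q * Qᵀ)).det := by
  have hQQ' : ∀ {k : ℕ} (A : Matrix (Fin p) (Fin k) ℝ), Qᵀ * (Q * A) = A := by
    intro k A; rw [← Matrix.mul_assoc, hQQ, Matrix.one_mul]
  set B : Matrix (Fin n) (Fin n) ℝ := z • 1 + L with hB
  set P : Matrix (Fin n) (Fin n) ℝ := 1 - Q * Qᵀ with hP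
  set Y : Matrix (Fin p) (Fin n) ℝ := z • Qᵀ - Qᵀ * B * P with hY
  set M : Matrix (Fin n ⊕ Fin p) (Fin n ⊕ Fin p) ℝ := Matrix.fromBlocks B Q Qᵀ 0 with hM
  set E : Matrix (Fin n ⊕ Fin p) (Fin n ⊕ Fin p) ℝ :=
    Matrix.fromBlocks P Q Y (z • (1 : Matrix (Fin p) (Fin p) ℝ)) with hE
  have hdetE : E.det = (-1 : ℝ) ^ p * z ^ p := by
    have hEE' : E * Matrix.fromBlocks 1 0 (-(z⁻¹ • Y)) 1
        = Matrix.fromBlocks (P - z⁻¹ • (Q * Y)) Q 0 (z • (1 : Matrix (Fin p) (Fin p) ℝ)) := by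
      rw [hE, Matrix.fromBlocks_multiply]
      congr 1 <;>
        simp only [hY, hP, hB, Matrix.mul_add, Matrix.add_mul, Matrix.mul_sub, Matrix.sub_mul,
          Matrix.mul_smul, Matrix.smul_mul, smul_sub, smul_add, smul_smul, Matrix.mul_assoc,
          Matrix.mul_one, Matrix.one_mul, Matrix.mul_zero, Matrix.zero_mul, Matrix.mul_neg,
          Matrix.neg_mul, smul_neg, inv_mul_cancel₀ hz, mul_inv_cancel₀ hz, one_smul,
          add_zero, zero_add, hQQ, hQQ'] <;>
        abel
    have h1 : P - z⁻¹ • (Q * Y)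
        = 1 + Q * (z⁻¹ • (Qᵀ * B * P) - ((2 : ℝ) • Qᵀ)) := by
      simp only [hY, hP, hB, Matrix.mul_add, Matrix.add_mul, Matrix.mul_sub, Matrix.sub_mul,
        Matrix.mul_smul, Matrix.smul_mul, smul_sub, smul_add, smul_smul, Matrix.mul_assoc,
        Matrix.mul_one, Matrix.one_mul, inv_mul_cancel₀ hz, one_smul, hQQ, hQQ', two_smul]
      abel
    have h2 : (1 : Matrix (Fin p) (Fin p) ℝ) + (z⁻¹ • (Qᵀ * B * P) - ((2 : ℝ) • Qᵀ)) * Q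
        = (-1 : Matrix (Fin p) (Fin p) ℝ) := by
      simp only [hP, hB, Matrix.mul_add, Matrix.add_mul, Matrix.mul_sub, Matrix.sub_mul,
        Matrix.mul_smul, Matrix.smul_mul, smul_sub, smul_add, smul_smul, Matrix.mul_assoc,
        Matrix.mul_one, Matrix.one_mul, inv_mul_cancel₀ hz, one_smul, hQQ, hQQ', two_smul]
      abel
    have hd := congrArg Matrix.det hEE'
    rw [Matrix.det_mul, Matrix.det_fromBlocks_zero₁₂, Matrix.det_one, Matrix.det_one,
      one_mul, mul_one, Matrix.det_fromBlocks_zero₂₁, h1,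
      Matrix.det_one_add_mul_comm, h2] at hd
    rw [hd]
    rw [Matrix.det_smul, Matrix.det_one, mul_one, Matrix.det_neg, Matrix.det_one, mul_one]
    simp [mul_comm]
  have hME : M * E = Matrix.fromBlocks (z • 1 + P * L * P) (B * Q + z • Q) 0 1 := by
    rw [hM, hE, Matrix.fromBlocks_multiply]
    congr 1 <;>
      simp only [hY, hP, hB, Matrix.mul_add, Matrix.add_mul, Matrix.mul_sub, Matrix.sub_mul,
        Matrix.mul_smul, Matrix.smul_mul, smul_sub, smul_add, smul_smul, Matrix.mul_assoc,
        Matrix.mul_one, Matrix.one_mul, Matrix.mul_zero, Matrix.zero_mul, smul_zero,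
        sub_zero, sub_self, add_zero, zero_add, hQQ, hQQ'] <;>
      try abel
  have hdetM : M.det * ((-1 : ℝ) ^ p * z ^ p) = (z • 1 + P * L * P).det := by
    have hd := congrArg Matrix.det hME
    rw [Matrix.det_mul, hdetE, Matrix.det_fromBlocks_zero₂₁, Matrix.det_one, mul_one] at hd
    exact hd
  have hsaddle : (Matrix.fromBlocks B V Vᵀ (0 : Matrix (Fin p) (Fin p) ℝ)).det
      = Rᵀ.det * M.det * R.det := by
    have hFMG : Matrix.fromBlocks (1 : Matrix (Fin n) (Fin n) ℝ) 0 0 Rᵀ * M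
        * Matrix.fromBlocks (1 : Matrix (Fin n) (Fin n) ℝ) 0 0 R
        = Matrix.fromBlocks B V Vᵀ (0 : Matrix (Fin p) (Fin p) ℝ) := by
      rw [hM, Matrix.fromBlocks_multiply, Matrix.fromBlocks_multiply]
      congr 1 <;> (try simp [hR, Matrix.transpose_mul])
    have hd := congrArg Matrix.det hFMG
    rw [Matrix.det_mul, Matrix.det_mul, Matrix.det_fromBlocks_zero₂₁,
      Matrix.det_fromBlocks_zero₂₁, Matrix.det_one, one_mul, one_mul] at hd
    rw [← hd]
  have hVV : (Vᵀ * V).det = Rᵀ.det * R.det := by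
    rw [hR, Matrix.transpose_mul, Matrix.mul_assoc, ← Matrix.mul_assoc Qᵀ Q R, hQQ,
      Matrix.one_mul, Matrix.det_mul]
  rw [hsaddle, hVV, ← hdetM]
  ring


/-- Normalisation constant of a fixed-size extended L-ensemble. -/
theorem saddle_normalisation_fixed_size {n p : ℕ}
    (L : Matrix (Fin n) (Fin n) ℝ) (hL : Lᵀ = L)
    (V : Matrix (Fin n) (Fin p) ℝ) (hV : V.rank = p)
    (hCPSD : ∀ x : Fin n → ℝ, Vᵀ.mulVec x = 0 → 0 ≤ x ⬝ᵥ L.mulVec x)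
    (Q : Matrix (Fin n) (Fin p) ℝ) (hQQ : Qᵀ * Q = 1)
    (hspan : ∃ R : Matrix (Fin p) (Fin p) ℝ, V = Q * R)
    (m : ℕ) (hpm : p ≤ m) (hmn : m ≤ n) :
    (-1 : ℝ) ^ p *
        ∑ X : {s : Finset (Fin n) // s.card = m}, (saddleSub L V X.1).det =
      esp (m - p) ((1 - Q * Qᵀ) * L * (1 - Q * Qᵀ)) * (Vᵀ * V).det := by
  classical
  obtain ⟨R, hR⟩ := hspan
  set Lt : Matrix (Fin n) (Fin n) ℝ := (1 - Q * Qᵀ) * L * (1 - Q * Qᵀ) with hLt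
  set PA : Polynomial ℝ := ∑ X : Finset (Fin n),
    Polynomial.C ((-1 : ℝ) ^ p * (saddleSub L V X).det)
      * Polynomial.X ^ (p + (n - X.card)) with hPA
  set PB : Polynomial ℝ := ∑ X : Finset (Fin n),
    Polynomial.C ((Vᵀ * V).det
        * (Lt.submatrix (fun i : ↥X => i.1) (fun i : ↥X => i.1)).det)
      * Polynomial.X ^ (n - X.card) with hPB
  have heval : ∀ z : ℝ, z ≠ 0 → PA.eval z = PB.eval z := by
    intro z hz
    have h1 := aux_saddle_expand L V z
    have h2 := aux_det_smul_one_add z Lt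
    have h3 := aux_star L V Q hQQ R hR z hz
    rw [hPA, hPB]
    simp only [Polynomial.eval_finset_sum, Polynomial.eval_mul, Polynomial.eval_C,
      Polynomial.eval_pow, Polynomial.eval_X]
    calc ∑ X : Finset (Fin n), (-1 : ℝ) ^ p * (saddleSub L V X).det * z ^ (p + (n - X.card))
        = z ^ p * (-1 : ℝ) ^ p
            * ∑ X : Finset (Fin n), z ^ (n - X.card) * (saddleSub L V X).det := by
          rw [Finset.mul_sum]
          apply Finset.sum_congr rfl
          intro X _
          rw [pow_add]; ring
      _ = (Vᵀ * V).det * (z • 1 + Lt).det := by rw [← h1, h3]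
      _ = _ := by
          rw [h2, Finset.mul_sum]
          apply Finset.sum_congr rfl
          intro X _
          rw [Fintype.card_fin]; ring
  have hPAB : PA = PB := by
    refine Polynomial.eq_of_infinite_eval_eq _ _ ?_
    refine Set.Infinite.mono ?_ ((Set.finite_singleton (0 : ℝ)).infinite_compl)
    intro z hz
    exact heval z hz
  have hcoeff : PA.coeff (p + (n - m)) = PB.coeff (p + (n - m)) := by rw [hPAB]
  have cA : PA.coeff (p + (n - m))
      = ∑ X : {s : Finset (Fin n) // s.card = m}, (-1 : ℝ) ^ p * (saddleSub L V X.1).det := by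
    rw [hPA, Polynomial.finset_sum_coeff]
    simp only [Polynomial.coeff_C_mul, Polynomial.coeff_X_pow, mul_ite, mul_one, mul_zero]
    rw [← Finset.sum_filter]
    have hfil : (Finset.univ.filter
          (fun X : Finset (Fin n) => p + (n - m) = p + (n - X.card)))
        = Finset.univ.filter (fun X : Finset (Fin n) => X.card = m) := by
      ext X
      have hXn : X.card ≤ n := by simpa using Finset.card_le_univ X
      simp only [Finset.mem_filter, Finset.mem_univ, true_and]
      omega
    rw [hfil]
    exact Finset.sum_subtype _ (by intro x; simp) _
  have cB : PB.coeff (p + (n - m))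
      = ∑ X : {s : Finset (Fin n) // s.card = m - p},
          (Vᵀ * V).det * (Lt.submatrix (fun i : ↥X.1 => i.1) (fun i : ↥X.1 => i.1)).det := by
    rw [hPB, Polynomial.finset_sum_coeff]
    simp only [Polynomial.coeff_C_mul, Polynomial.coeff_X_pow, mul_ite, mul_one, mul_zero]
    rw [← Finset.sum_filter]
    have hfil : (Finset.univ.filter
          (fun X : Finset (Fin n) => p + (n - m) = n - X.card))
        = Finset.univ.filter (fun X : Finset (Fin n) => X.card = m - p) := by
      ext X
      have hXn : X.card ≤ n := by simpa using Finset.card_le_univ X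
      simp only [Finset.mem_filter, Finset.mem_univ, true_and]
      omega
    rw [hfil]
    exact Finset.sum_subtype _ (by intro x; simp) _
  rw [cA, cB] at hcoeff
  rw [Finset.mul_sum, hcoeff, esp, Finset.sum_mul]
  apply Finset.sum_congr rfl
  intro X _
  ring
end

section
/- Let (L,V) be a nonnegative pair with L̃ = (I−QQᵀ)L(I−QQᵀ), Q an orthonormal basis of span(V ∈ ℝ^{n×p}). Then (−1)^p · Σ_{X⊆{1,...,n}} det([[L_X, V_{X,:}],[(V_{X,:})ᵀ, 0]]) = det(I + L̃) · det(VᵀV), where the sum ranges over all subsets X of {1,...,n}. -/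
open Matrix

lemma det_piecewise {ι R : Type*} [Fintype ι] [DecidableEq ι] [CommRing R]
    (A : Matrix ι ι R) (d : ι → R) (s : Finset ι) :
    Matrix.det (s.piecewise A (Matrix.diagonal d)) =
      (∏ i ∈ sᶜ, d i) * (A.submatrix (Subtype.val : s → ι) Subtype.val).det := by
  classical
  refine (Matrix.det_submatrix_equiv_self (Equiv.sumCompl (· ∈ s)) _).symm.trans ?_
  have hblock : Matrix.submatrix (s.piecewise A (Matrix.diagonal d))
      (Equiv.sumCompl (· ∈ s)) (Equiv.sumCompl (· ∈ s)) =
      Matrix.fromBlocks (A.submatrix Subtype.val Subtype.val)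
        (A.submatrix Subtype.val Subtype.val)
        0 (Matrix.diagonal fun i : {x // ¬ x ∈ s} => d i.1) := by
    ext i j
    rcases i with i | i <;> rcases j with j | j <;>
      (dsimp only [Matrix.submatrix, Matrix.of_apply]; simp [Finset.piecewise, Matrix.diagonal, fromBlocks, i.2, Subtype.ext_iff])
    exact fun h => absurd (h.symm ▸ j.2) i.2
  rw [hblock, Matrix.det_fromBlocks_zero₂₁, Matrix.det_diagonal, mul_comm]
  congr 1
  exact (Finset.prod_subtype sᶜ (by simp) d).symm

lemma det_add_diagonal {ι R : Type*} [Fintype ι] [DecidableEq ι] [CommRing R]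
    (A : Matrix ι ι R) (d : ι → R) :
    (A + Matrix.diagonal d).det =
      ∑ s : Finset ι, (∏ i ∈ sᶜ, d i) *
        (A.submatrix (Subtype.val : s → ι) Subtype.val).det := by
  classical
  have h := (Matrix.detRowAlternating (R := R) (n := ι)).toMultilinearMap.map_add_univ
    (fun i => A i) (fun i => Matrix.diagonal d i)
  simp only [← det_piecewise]
  exact h

/-- the finset `X ∪ {all of the p border indices}` inside `Fin n ⊕ Fin p`. -/
def jmap {n p : ℕ} (X : Finset (Fin n)) : Finset (Fin n ⊕ Fin p) :=
  X.map ⟨Sum.inl, Sum.inl_injective⟩ ∪ Finset.univ.map ⟨Sum.inr, Sum.inr_injective⟩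

lemma mem_jmap_inl {n p : ℕ} (X : Finset (Fin n)) (a : Fin n) :
    (Sum.inl a : Fin n ⊕ Fin p) ∈ jmap (p := p) X ↔ a ∈ X := by
  simp [jmap]

lemma mem_jmap_inr {n p : ℕ} (X : Finset (Fin n)) (b : Fin p) :
    (Sum.inr b : Fin n ⊕ Fin p) ∈ jmap (p := p) X := by
  simp [jmap]

/-- Reindexing equivalence between `↥X ⊕ Fin p` and `↥(jmap X)`. -/
def sumEquiv {n p : ℕ} (X : Finset (Fin n)) :
    (↥X ⊕ Fin p) ≃ ↥(jmap (p := p) X) where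
  toFun z := match z with
    | Sum.inl x => ⟨Sum.inl x.1, (mem_jmap_inl X x.1).mpr x.2⟩
    | Sum.inr k => ⟨Sum.inr k, mem_jmap_inr X k⟩
  invFun z := match z with
    | ⟨Sum.inl a, h⟩ => Sum.inl ⟨a, (mem_jmap_inl X a).mp h⟩
    | ⟨Sum.inr k, _⟩ => Sum.inr k
  left_inv := by rintro (x | k) <;> rfl
  right_inv := by rintro ⟨a | k, h⟩ <;> rfl

lemma det_saddleSub {n p : ℕ} (L : Matrix (Fin n) (Fin n) ℝ) (V : Matrix (Fin n) (Fin p) ℝ)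
    (X : Finset (Fin n)) :
    (saddleSub L V X).det =
      (((Matrix.fromBlocks L V Vᵀ 0).submatrix
        (Subtype.val : (jmap (p := p) X : Finset (Fin n ⊕ Fin p)) → _) Subtype.val)).det := by
  rw [← Matrix.det_submatrix_equiv_self (sumEquiv X)]
  congr 1
  ext z w
  rcases z with x | k <;> rcases w with y | l <;> rfl

/-- Normalisation constant of a varying-size extended L-ensemble. -/
theorem saddle_normalisation {n p : ℕ}
    (L : Matrix (Fin n) (Fin n) ℝ) (hL : Lᵀ = L)
    (V : Matrix (Fin n) (Fin p) ℝ) (hV : V.rank = p)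
    (hCPSD : ∀ x : Fin n → ℝ, Vᵀ.mulVec x = 0 → 0 ≤ x ⬝ᵥ L.mulVec x)
    (Q : Matrix (Fin n) (Fin p) ℝ) (hQQ : Qᵀ * Q = 1)
    (hspan : ∃ R : Matrix (Fin p) (Fin p) ℝ, V = Q * R) :
    (-1 : ℝ) ^ p * ∑ X : Finset (Fin n), (saddleSub L V X).det =
      (1 + (1 - Q * Qᵀ) * L * (1 - Q * Qᵀ)).det * (Vᵀ * V).det := by
  classical
  obtain ⟨R, hVR⟩ := hspan
  set P : Matrix (Fin n) (Fin n) ℝ := 1 - Q * Qᵀ with hP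
  have h2 : ((-1 : ℝ) ^ p) * ((-1 : ℝ) ^ p) = 1 := by
    rw [← mul_pow]; norm_num
  -- Step 1 : sum over subsets equals a single big determinant
  have hAD : Matrix.fromBlocks L V Vᵀ 0 +
      Matrix.diagonal (Sum.elim (fun _ => (1 : ℝ)) (fun _ => 0)) =
      Matrix.fromBlocks (L + 1) V Vᵀ 0 := by
    ext i j
    rcases i with i | i <;> rcases j with j | j <;>
      simp [Matrix.diagonal, Matrix.fromBlocks, Matrix.one_apply]
  have hsum : (Matrix.fromBlocks (L + 1) V Vᵀ 0).det =
      ∑ X : Finset (Fin n), (saddleSub L V X).det := by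
    rw [← hAD, det_add_diagonal]
    rw [← Finset.sum_filter_of_ne
      (p := fun s : Finset (Fin n ⊕ Fin p) => ∀ b : Fin p, Sum.inr b ∈ s)
      (fun s _ hs b => by
        by_contra hb
        exact hs (by rw [Finset.prod_eq_zero (Finset.mem_compl.mpr hb) rfl, zero_mul]))]
    refine (Finset.sum_nbij' (fun X : Finset (Fin n) => jmap (p := p) X)
      (fun s => s.preimage Sum.inl Sum.inl_injective.injOn) ?_ ?_ ?_ ?_ ?_).symm
    · intro X _
      simp only [Finset.mem_filter, Finset.mem_univ, true_and]
      exact fun b => mem_jmap_inr X b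
    · intro s _; exact Finset.mem_univ _
    · intro X _
      ext a; simp [jmap]
    · intro s hs
      simp only [Finset.mem_filter, Finset.mem_univ, true_and] at hs
      ext i
      rcases i with a | b
      · simp [jmap]
      · simp [jmap, hs b]
    · intro X _
      rw [det_saddleSub, Finset.prod_eq_one, one_mul]
      intro i hi
      rcases i with a | b
      · rfl
      · exact absurd (mem_jmap_inr X b) (Finset.mem_compl.mp hi)
  -- Step 2 : factor out R
  have hfact : Matrix.fromBlocks (L + 1) V Vᵀ 0 =
      Matrix.fromBlocks 1 0 0 Rᵀ * Matrix.fromBlocks (L + 1) Q Qᵀ 0 *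
        Matrix.fromBlocks 1 0 0 R := by
    rw [hVR]
    simp [Matrix.fromBlocks_multiply, Matrix.transpose_mul, Matrix.mul_assoc]
  have hdet1 : (Matrix.fromBlocks (L + 1) V Vᵀ 0).det =
      R.det * R.det * (Matrix.fromBlocks (L + 1) Q Qᵀ (0 : Matrix (Fin p) (Fin p) ℝ)).det := by
    rw [hfact, Matrix.det_mul, Matrix.det_mul, Matrix.det_fromBlocks_zero₂₁,
      Matrix.det_fromBlocks_zero₂₁, Matrix.det_one, Matrix.det_transpose]
    ring
  -- Step 3 : the bordered determinant
  have hQQQ : Q * Qᵀ * (Q * Qᵀ) = Q * Qᵀ := by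
    rw [Matrix.mul_assoc Q Qᵀ, ← Matrix.mul_assoc Qᵀ Q, hQQ, Matrix.one_mul]
  have hPQ : P * Q = 0 := by
    rw [hP, Matrix.sub_mul, Matrix.one_mul, Matrix.mul_assoc, hQQ, Matrix.mul_one, sub_self]
  have hS : Matrix.fromBlocks P Q Qᵀ (0 : Matrix (Fin p) (Fin p) ℝ) =
      Matrix.fromBlocks 1 (-Q) 0 1 * Matrix.fromBlocks 1 Q Qᵀ 0 := by
    simp [Matrix.fromBlocks_multiply, hP, sub_eq_add_neg]
  have hdetS : (Matrix.fromBlocks P Q Qᵀ (0 : Matrix (Fin p) (Fin p) ℝ)).det = (-1 : ℝ) ^ p := by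
    rw [hS, Matrix.det_mul, Matrix.det_fromBlocks_zero₂₁, Matrix.det_fromBlocks_one₁₁]
    simp [hQQ, zero_sub, Matrix.det_neg]
  have h11 : P * (L + 1) + Q * Qᵀ = 1 + P * L := by
    rw [hP]; noncomm_ring
  have hSB : Matrix.fromBlocks P Q Qᵀ (0 : Matrix (Fin p) (Fin p) ℝ) *
      Matrix.fromBlocks (L + 1) Q Qᵀ 0 =
      Matrix.fromBlocks (1 + P * L) 0 (Qᵀ * (L + 1)) 1 := by
    simp [Matrix.fromBlocks_multiply, hPQ, hQQ, h11]
  have hdetB : (Matrix.fromBlocks (L + 1) Q Qᵀ (0 : Matrix (Fin p) (Fin p) ℝ)).det =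
      (-1 : ℝ) ^ p * (1 + P * L).det := by
    have hthis := congrArg Matrix.det hSB
    rw [Matrix.det_mul, hdetS, Matrix.det_fromBlocks_zero₁₂, Matrix.det_one, mul_one] at hthis
    calc (Matrix.fromBlocks (L + 1) Q Qᵀ (0 : Matrix (Fin p) (Fin p) ℝ)).det
        = (((-1 : ℝ) ^ p) * ((-1 : ℝ) ^ p)) *
          (Matrix.fromBlocks (L + 1) Q Qᵀ (0 : Matrix (Fin p) (Fin p) ℝ)).det := by
          rw [h2, one_mul]
      _ = (-1 : ℝ) ^ p * (1 + P * L).det := by rw [mul_assoc, hthis]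
  -- Step 4 : projection identity
  have hPP : P * P = P := by
    rw [hP, Matrix.sub_mul, Matrix.one_mul, Matrix.mul_sub, Matrix.mul_one, hQQQ, sub_self,
      sub_zero]
  have hdetPLP : (1 + P * L * P).det = (1 + P * L).det := by
    rw [Matrix.det_one_add_mul_comm (P * L) P, ← Matrix.mul_assoc, hPP]
  -- Step 5 : VᵀV
  have hVtV : Vᵀ * V = Rᵀ * R := by
    rw [hVR, Matrix.transpose_mul, Matrix.mul_assoc, ← Matrix.mul_assoc Qᵀ Q R, hQQ,
      Matrix.one_mul]
  rw [← hsum, hdet1, hdetB, hdetPLP, hVtV, Matrix.det_mul, Matrix.det_transpose]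
  linear_combination (R.det * R.det * (1 + P * L).det) * h2
end

section
/- Let (L,V) be a nonnegative pair and let L' = L + V·Xᵀ + Y·Vᵀ for arbitrary matrices X, Y ∈ ℝ^{n×p}. Then for every subset S ⊆ {1,...,n}: det([[L'_S, V_{S,:}],[(V_{S,:})ᵀ, 0]]) = det([[L_S, V_{S,:}],[(V_{S,:})ᵀ, 0]]). Consequently the extended L-ensembles based on (L,V) and (L',V) coincide. -/
open Matrix

/-- Invariance of extended L-ensembles under modifications of `L` along `span(V)`:
replacing `L` by `L' = L + V Xᵀ + Y Vᵀ` leaves all saddle-point determinants unchanged. -/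
theorem saddle_det_invariant_add {n p : ℕ}
    (L : Matrix (Fin n) (Fin n) ℝ) (hL : Lᵀ = L)
    (V : Matrix (Fin n) (Fin p) ℝ) (hV : V.rank = p)
    (hCPSD : ∀ x : Fin n → ℝ, Vᵀ.mulVec x = 0 → 0 ≤ x ⬝ᵥ L.mulVec x)
    (X Y : Matrix (Fin n) (Fin p) ℝ) :
    ∀ S : Finset (Fin n),
      (saddleSub (L + V * Xᵀ + Y * Vᵀ) V S).det = (saddleSub L V S).det := by
  intro S
  set f : ↥S → Fin n := fun i => i.1 with hf
  set A := L.submatrix f f with hA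
  set Vs := V.submatrix f id with hVs
  set Xs := X.submatrix f id with hXs
  set Ys := Y.submatrix f id with hYs
  have hVX : (V * Xᵀ).submatrix f f = Vs * Xsᵀ := by
    have := Matrix.submatrix_mul_equiv V Xᵀ f (Equiv.refl (Fin p)) f
    simpa [hVs, hXs, Matrix.transpose_submatrix] using this.symm
  have hYV : (Y * Vᵀ).submatrix f f = Ys * Vsᵀ := by
    have := Matrix.submatrix_mul_equiv Y Vᵀ f (Equiv.refl (Fin p)) f
    simpa [hVs, hYs, Matrix.transpose_submatrix] using this.symm
  have key : saddleSub (L + V * Xᵀ + Y * Vᵀ) V S =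
      Matrix.fromBlocks 1 Ys 0 1 * saddleSub L V S * Matrix.fromBlocks 1 0 Xsᵀ 1 := by
    simp only [saddleSub, Matrix.fromBlocks_multiply, Matrix.submatrix_add, Pi.add_apply,
      hVX, hYV, ← hA, ← hVs, Matrix.one_mul, Matrix.mul_one, Matrix.zero_mul,
      Matrix.mul_zero, add_zero, zero_add]
    congr 1
    rw [← hf, hVX, hYV, ← hVs]
    abel
  rw [key, Matrix.det_mul, Matrix.det_mul, Matrix.det_fromBlocks_zero₂₁,
    Matrix.det_fromBlocks_zero₁₂, Matrix.det_one, Matrix.det_one]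
  ring
end
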